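/- arXiv:1301.0986 — 8 statements merged into one kernel-verified Lean document; each statement's English description precedes it below -/
import Mathlib

section
/- For matrices A (m×n) and B (m×k), the rank of the row block matrix [A, B] equals rank(A) + rank((I − AA†)B), where A† is the Moore–Penrose inverse of A. -/
open Matrix
open scoped ComplexOrder

def IsMoorePenrose {m n : Type*} [Fintype m] [Fintype n]
    (A : Matrix m n ℂ) (X : Matrix n m ℂ) : Prop :=
  A * X * A = A ∧ X * A * X = X ∧ (A * X)ᴴ = A * X ∧ (X * A)ᴴ = X * A

open Classical in
noncomputable def pinv {m n : Type*} [Fintype m] [Fintype n]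
    (A : Matrix m n ℂ) : Matrix n m ℂ :=
  if h : ∃ X, IsMoorePenrose A X then h.choose else 0

section Existence

variable {m n : Type*} [Fintype m] [Fintype n] [DecidableEq n]

lemma exists_isMoorePenrose (A : Matrix m n ℂ) : ∃ X, IsMoorePenrose A X := by
  have hH : (Aᴴ * A).IsHermitian := isHermitian_conjTranspose_mul_self A
  set U : Matrix n n ℂ := (Matrix.IsHermitian.eigenvectorUnitary hH : Matrix n n ℂ) with hUdef
  set d : n → ℂ := RCLike.ofReal ∘ hH.eigenvalues with hd
  have hU1 : Uᴴ * U = 1 := by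
    simpa [star_eq_conjTranspose] using
      mem_unitaryGroup_iff'.mp (Matrix.IsHermitian.eigenvectorUnitary hH).2
  have hU2 : U * Uᴴ = 1 := by
    simpa [star_eq_conjTranspose] using
      mem_unitaryGroup_iff.mp (Matrix.IsHermitian.eigenvectorUnitary hH).2
  have hspec : Aᴴ * A = U * diagonal d * Uᴴ := by
    have := hH.spectral_theorem
    simp [star_eq_conjTranspose] at this
    exact this
  -- columns of A * U with zero eigenvalue vanish
  have hcol : ∀ j, d j = 0 → A *ᵥ ⇑(hH.eigenvectorBasis j) = 0 := by
    intro j hj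
    have hj' : hH.eigenvalues j = 0 := by
      have := hj
      simp only [hd, Function.comp_apply, RCLike.ofReal_eq_zero] at this
      exact this
    have h1 : (Aᴴ * A) *ᵥ ⇑(hH.eigenvectorBasis j) = 0 := by
      rw [hH.mulVec_eigenvectorBasis, hj', zero_smul]
    have h2 : star (A *ᵥ ⇑(hH.eigenvectorBasis j)) ⬝ᵥ (A *ᵥ ⇑(hH.eigenvectorBasis j)) = 0 := by
      rw [star_mulVec, dotProduct_mulVec, vecMul_vecMul, ← dotProduct_mulVec, h1,
        dotProduct_zero]
    exact dotProduct_star_self_eq_zero.mp h2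
  have hAUapp : ∀ i j, (A * U) i j = (A *ᵥ ⇑(hH.eigenvectorBasis j)) i := by
    intro i j
    simp [mul_apply, mulVec, dotProduct, hUdef, Matrix.IsHermitian.eigenvectorUnitary_apply]
  -- key column fact as a matrix identity
  have hAU : ∀ (g : n → ℂ), (∀ j, d j ≠ 0 → g j = 1) → (∀ j, d j = 0 → g j = 0) →
      A * U * diagonal g = A * U := by
    intro g hg1 hg0
    ext i j
    rw [mul_diagonal]
    by_cases hj : d j = 0
    · rw [hg0 j hj, mul_zero, hAUapp, hcol j hj, Pi.zero_apply]
    · rw [hg1 j hj, mul_one]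
  set X : Matrix n m ℂ := U * diagonal (fun i => (d i)⁻¹) * Uᴴ * Aᴴ with hX
  have hstar_d : ∀ i, star (d i) = d i := by
    intro i; simp [hd, Complex.star_def, Complex.conj_ofReal]
  have hproj1 : ∀ j, d j ≠ 0 → (d j)⁻¹ * d j = 1 := fun j hj => inv_mul_cancel₀ hj
  have hproj0 : ∀ j, d j = 0 → (d j)⁻¹ * d j = 0 := fun j hj => by rw [hj, mul_zero]
  have hXA : X * A = U * (diagonal (fun i => (d i)⁻¹ * d i) * Uᴴ) := by
    rw [hX]
    simp only [Matrix.mul_assoc]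
    rw [hspec]
    simp only [Matrix.mul_assoc]
    rw [← Matrix.mul_assoc Uᴴ U, hU1, Matrix.one_mul,
      ← Matrix.mul_assoc (diagonal _) (diagonal _), diagonal_mul_diagonal]
  have hAXA : A * X * A = A := by
    rw [Matrix.mul_assoc, hXA, ← Matrix.mul_assoc, ← Matrix.mul_assoc,
      hAU _ hproj1 hproj0, Matrix.mul_assoc, hU2, Matrix.mul_one]
  refine ⟨X, hAXA, ?_, ?_, ?_⟩
  · -- X * A * X = X
    rw [hXA, hX]
    simp only [Matrix.mul_assoc]
    rw [← Matrix.mul_assoc Uᴴ U, hU1, Matrix.one_mul,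
      ← Matrix.mul_assoc (diagonal _) (diagonal _), diagonal_mul_diagonal]
    have : (fun i => (d i)⁻¹ * d i * (d i)⁻¹) = fun i => (d i)⁻¹ := by
      funext i
      by_cases hi : d i = 0
      · simp [hi]
      · rw [inv_mul_cancel₀ hi, one_mul]
    rw [this]
  · -- (A * X)ᴴ = A * X
    rw [hX]
    have hs : star (fun i => (d i)⁻¹) = fun i => (d i)⁻¹ := by
      funext i
      simp only [Pi.star_apply, star_inv₀, hstar_d i]
    simp only [conjTranspose_mul, conjTranspose_conjTranspose, diagonal_conjTranspose, hs,
      Matrix.mul_assoc]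
  · -- (X * A)ᴴ = X * A
    rw [hXA]
    have hs : star (fun i => (d i)⁻¹ * d i) = fun i => (d i)⁻¹ * d i := by
      funext i
      simp only [Pi.star_apply, star_mul', star_inv₀, hstar_d i]
    simp only [conjTranspose_mul, conjTranspose_conjTranspose, diagonal_conjTranspose, hs,
      Matrix.mul_assoc]

lemma pinv_isMoorePenrose (A : Matrix m n ℂ) : IsMoorePenrose A (pinv A) := by
  have h : ∃ X, IsMoorePenrose A X := exists_isMoorePenrose A
  rw [pinv, dif_pos h]
  exact h.choose_spec

end Existence

theorem rank_fromColumns_eq {m n k : ℕ} (A : Matrix (Fin m) (Fin n) ℂ)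
    (B : Matrix (Fin m) (Fin k) ℂ) :
    (Matrix.fromCols A B).rank = A.rank + ((1 - A * pinv A) * B).rank := by
  obtain ⟨h1, h2, h3, h4⟩ := pinv_isMoorePenrose A
  have hPP : (A * pinv A) * (A * pinv A) = A * pinv A := by
    rw [← Matrix.mul_assoc, h1]
  have hPC : (A * pinv A) * ((1 - A * pinv A) * B) = 0 := by
    rw [← Matrix.mul_assoc, Matrix.mul_sub, Matrix.mul_one, hPP, sub_self, Matrix.zero_mul]
  have hBC : (A * pinv A) * B + (1 - A * pinv A) * B = B := by
    rw [← Matrix.add_mul, add_sub_cancel, Matrix.one_mul]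
  -- range equality
  have hr : LinearMap.range (fromCols A B).mulVecLin
      = LinearMap.range A.mulVecLin ⊔ LinearMap.range ((1 - A * pinv A) * B).mulVecLin := by
    apply le_antisymm
    · rintro x ⟨v, rfl⟩
      have hv : (fromCols A B).mulVecLin v
          = A.mulVecLin ((v ∘ Sum.inl) + (pinv A * B) *ᵥ (v ∘ Sum.inr))
            + ((1 - A * pinv A) * B).mulVecLin (v ∘ Sum.inr) := by
        simp only [mulVecLin_apply]
        conv_lhs => rw [← Sum.elim_comp_inl_inr v, fromCols_mulVec_sumElim]
        rw [mulVec_add, mulVec_mulVec, ← Matrix.mul_assoc]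
        conv_lhs => rw [← hBC, add_mulVec]
        abel
      rw [hv]
      exact Submodule.add_mem_sup (LinearMap.mem_range_self _ _) (LinearMap.mem_range_self _ _)
    · apply sup_le
      · rintro x ⟨v, rfl⟩
        refine ⟨Sum.elim v 0, ?_⟩
        simp [mulVecLin_apply, fromCols_mulVec_sumElim]
      · rintro x ⟨v, rfl⟩
        refine ⟨Sum.elim (-((pinv A * B) *ᵥ v)) v, ?_⟩
        simp only [mulVecLin_apply, fromCols_mulVec_sumElim, mulVec_neg, mulVec_mulVec]
        rw [← Matrix.mul_assoc, Matrix.sub_mul, Matrix.one_mul, sub_mulVec]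
        abel
  -- disjointness
  have hdis : LinearMap.range A.mulVecLin ⊓ LinearMap.range ((1 - A * pinv A) * B).mulVecLin
      = ⊥ := by
    rw [Submodule.eq_bot_iff]
    rintro x ⟨⟨u, hu⟩, ⟨w, hw⟩⟩
    have e1 : (A * pinv A) *ᵥ x = x := by
      rw [← hu, mulVecLin_apply, mulVec_mulVec, h1]
    have e2 : (A * pinv A) *ᵥ x = 0 := by
      rw [← hw, mulVecLin_apply, mulVec_mulVec, hPC, zero_mulVec]
    rw [← e1, e2]
  have hfin := Submodule.finrank_sup_add_finrank_inf_eq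
    (LinearMap.range A.mulVecLin) (LinearMap.range ((1 - A * pinv A) * B).mulVecLin)
  rw [hdis, finrank_bot, add_zero] at hfin
  show Module.finrank ℂ ↥(LinearMap.range (fromCols A B).mulVecLin) = _
  rw [hr, hfin]
  rfl
end

section
/- Let A be an m×m Hermitian matrix and B an m×n matrix with A positive semidefinite. Then for the Hermitian block matrix M = [[A, B],[B*, 0]], one has i₊(M) = rank([A, B]), i₋(M) = rank(B), and rank(M) = rank([A, B]) + rank(B). -/
set_option linter.unusedSectionVars false
set_option maxHeartbeats 1000000

open Matrix
open scoped ComplexOrder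

noncomputable def iPos {n : Type*} [Fintype n] [DecidableEq n] (A : Matrix n n ℂ) : ℕ :=
  if h : A.IsHermitian then Nat.card {i // 0 < h.eigenvalues i} else 0

noncomputable def iNeg {n : Type*} [Fintype n] [DecidableEq n] (A : Matrix n n ℂ) : ℕ :=
  if h : A.IsHermitian then Nat.card {i // h.eigenvalues i < 0} else 0

open Finset Module

namespace InertiaAux

variable {ι : Type*} [Fintype ι] [DecidableEq ι]

/-- The (real) quadratic form of a complex matrix. -/
noncomputable def q (M : Matrix ι ι ℂ) (x : ι → ℂ) : ℝ := Complex.re (star x ⬝ᵥ M *ᵥ x)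

lemma re_star_dot_self (w : ι → ℂ) :
    Complex.re (star w ⬝ᵥ w) = ∑ i, Complex.normSq (w i) := by
  simp only [dotProduct, Pi.star_apply, Complex.re_sum]
  exact Finset.sum_congr rfl fun i _ => by
    simp [Complex.star_def, Complex.mul_re, Complex.normSq_apply]

lemma re_star_dot_self_nonneg (w : ι → ℂ) : 0 ≤ Complex.re (star w ⬝ᵥ w) := by
  rw [re_star_dot_self]
  exact Finset.sum_nonneg fun i _ => Complex.normSq_nonneg _

lemma eq_zero_of_re_star_dot_self (w : ι → ℂ) (h : Complex.re (star w ⬝ᵥ w) ≤ 0) : w = 0 := by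
  rw [re_star_dot_self] at h
  have h2 : ∀ i ∈ Finset.univ, Complex.normSq (w i) = 0 := by
    rw [← Finset.sum_eq_zero_iff_of_nonneg (fun i _ => Complex.normSq_nonneg (w i))]
    exact le_antisymm h (Finset.sum_nonneg (fun i _ => Complex.normSq_nonneg (w i)))
  funext i
  exact Complex.normSq_eq_zero.mp (h2 i (Finset.mem_univ i))

variable {M : Matrix ι ι ℂ} (hM : M.IsHermitian)

lemma q_repr_eq (x : EuclideanSpace ℂ ι) :
    q M x = ∑ i, hM.eigenvalues i * Complex.normSq (hM.eigenvectorBasis.repr x i) := by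
  set b := hM.eigenvectorBasis with hb
  have hsym := (Matrix.isHermitian_iff_isSymmetric.mp hM)
  have hT : ∀ i, Matrix.toEuclideanLin M (b i) = (hM.eigenvalues i : ℂ) • b i := by
    intro i
    apply (WithLp.equiv 2 (ι → ℂ)).injective
    have := hM.mulVec_eigenvectorBasis i
    simpa using this
  have key : ∀ i, b.repr (Matrix.toEuclideanLin M x) i
      = (hM.eigenvalues i : ℂ) * b.repr x i := by
    intro i
    rw [b.repr_apply_apply, b.repr_apply_apply, ← hsym (b i) x, hT i, inner_smul_left]
    simp [Complex.conj_ofReal]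
  have h1 : q M x = Complex.re (inner (𝕜 := ℂ) x (Matrix.toEuclideanLin M x)) := by
    simp [q, PiLp.inner_apply, dotProduct, Matrix.toEuclideanLin_apply, mul_comm]
  rw [h1, ← b.repr.inner_map_map x (Matrix.toEuclideanLin M x)]
  rw [PiLp.inner_apply, Complex.re_sum]
  apply Finset.sum_congr rfl
  intro i _
  rw [key i]
  simp only [RCLike.inner_apply]
  rw [show (hM.eigenvalues i : ℂ) * b.repr x i * (starRingEnd ℂ) (b.repr x i)
      = (hM.eigenvalues i : ℂ) * ((starRingEnd ℂ) (b.repr x i) * b.repr x i) by ring,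
    ← Complex.normSq_eq_conj_mul_self]
  simp [Complex.mul_re]


section Span

variable (b : OrthonormalBasis ι ℂ (EuclideanSpace ℂ ι))

lemma finrank_span_image (S : Set ι) [Fintype S] :
    finrank ℂ (Submodule.span ℂ (b '' S)) = Fintype.card S := by
  rw [Set.image_eq_range]
  exact finrank_span_eq_card
    (b.orthonormal.linearIndependent.comp ((↑) : S → ι) Subtype.coe_injective)

lemma repr_eq_zero_of_mem_span {S : Set ι} {x : EuclideanSpace ℂ ι}
    (hx : x ∈ Submodule.span ℂ (b '' S)) {i : ι} (hi : i ∉ S) : b.repr x i = 0 := by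
  induction hx using Submodule.span_induction with
  | mem y hy =>
    obtain ⟨j, hj, rfl⟩ := hy
    rw [b.repr_self]
    rw [EuclideanSpace.single_apply]
    simp only [ite_eq_right_iff]
    rintro rfl; exact absurd hj hi
  | zero => simp
  | add y z _ _ hy hz => rw [map_add]; simp [hy, hz]
  | smul c y _ hy => rw [_root_.map_smul]; simp [hy]

lemma exists_repr_ne_zero {x : EuclideanSpace ℂ ι} (hx : x ≠ 0) :
    ∃ i, b.repr x i ≠ 0 := by
  by_contra h
  push_neg at h
  apply hx
  apply b.repr.injective
  ext i
  simp [h i]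

end Span

section Sign

variable {M : Matrix ι ι ℂ} (hM : M.IsHermitian)

lemma q_pos_on_span {S : Set ι} (hS : ∀ i ∈ S, 0 < hM.eigenvalues i)
    {x : EuclideanSpace ℂ ι}
    (hx : x ∈ Submodule.span ℂ (hM.eigenvectorBasis '' S)) (hx0 : x ≠ 0) : 0 < q M x := by
  rw [q_repr_eq hM]
  obtain ⟨i₀, hi₀⟩ := exists_repr_ne_zero hM.eigenvectorBasis hx0
  have hi₀S : i₀ ∈ S := by
    by_contra h
    exact hi₀ (repr_eq_zero_of_mem_span hM.eigenvectorBasis hx h)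
  apply Finset.sum_pos'
  · intro i _
    rcases eq_or_ne (hM.eigenvectorBasis.repr x i) 0 with h | h
    · simp [h]
    · have hiS : i ∈ S := by
        by_contra hc
        exact h (repr_eq_zero_of_mem_span hM.eigenvectorBasis hx hc)
      exact mul_nonneg (hS i hiS).le (Complex.normSq_nonneg _)
  · exact ⟨i₀, Finset.mem_univ _,
      mul_pos (hS i₀ hi₀S) (Complex.normSq_pos.mpr hi₀)⟩

lemma q_neg_on_span {S : Set ι} (hS : ∀ i ∈ S, hM.eigenvalues i < 0)
    {x : EuclideanSpace ℂ ι}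
    (hx : x ∈ Submodule.span ℂ (hM.eigenvectorBasis '' S)) (hx0 : x ≠ 0) : q M x < 0 := by
  rw [q_repr_eq hM]
  obtain ⟨i₀, hi₀⟩ := exists_repr_ne_zero hM.eigenvectorBasis hx0
  have hi₀S : i₀ ∈ S := by
    by_contra h
    exact hi₀ (repr_eq_zero_of_mem_span hM.eigenvectorBasis hx h)
  have : ∑ i, hM.eigenvalues i * Complex.normSq (hM.eigenvectorBasis.repr x i) < 0 := by
    apply Finset.sum_neg' ?_ ⟨i₀, Finset.mem_univ _, mul_neg_of_neg_of_pos (hS i₀ hi₀S)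
      (Complex.normSq_pos.mpr hi₀)⟩
    intro i _
    rcases eq_or_ne (hM.eigenvectorBasis.repr x i) 0 with h | h
    · simp [h]
    · have hiS : i ∈ S := by
        by_contra hc
        exact h (repr_eq_zero_of_mem_span hM.eigenvectorBasis hx hc)
      exact mul_nonpos_of_nonpos_of_nonneg (hS i hiS).le (Complex.normSq_nonneg _)
  exact this

lemma q_nonpos_on_span {S : Set ι} (hS : ∀ i ∈ S, hM.eigenvalues i ≤ 0)
    {x : EuclideanSpace ℂ ι}
    (hx : x ∈ Submodule.span ℂ (hM.eigenvectorBasis '' S)) : q M x ≤ 0 := by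
  rw [q_repr_eq hM]
  apply Finset.sum_nonpos
  intro i _
  rcases eq_or_ne (hM.eigenvectorBasis.repr x i) 0 with h | h
  · simp [h]
  · have hiS : i ∈ S := by
      by_contra hc
      exact h (repr_eq_zero_of_mem_span hM.eigenvectorBasis hx hc)
    exact mul_nonpos_of_nonpos_of_nonneg (hS i hiS) (Complex.normSq_nonneg _)

lemma q_nonneg_on_span {S : Set ι} (hS : ∀ i ∈ S, 0 ≤ hM.eigenvalues i)
    {x : EuclideanSpace ℂ ι}
    (hx : x ∈ Submodule.span ℂ (hM.eigenvectorBasis '' S)) : 0 ≤ q M x := by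
  rw [q_repr_eq hM]
  apply Finset.sum_nonneg
  intro i _
  rcases eq_or_ne (hM.eigenvectorBasis.repr x i) 0 with h | h
  · simp [h]
  · have hiS : i ∈ S := by
      by_contra hc
      exact h (repr_eq_zero_of_mem_span hM.eigenvectorBasis hx hc)
    exact mul_nonneg (hS i hiS) (Complex.normSq_nonneg _)

end Sign

section Count

variable {M : Matrix ι ι ℂ} (hM : M.IsHermitian)

lemma finrank_add_finrank_le {W V : Submodule ℂ (EuclideanSpace ℂ ι)}
    (hW : ∀ x ∈ W, x ≠ 0 → 0 < q M x) (hV : ∀ x ∈ V, q M x ≤ 0) :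
    finrank ℂ W + finrank ℂ V ≤ Fintype.card ι := by
  have hdisj : W ⊓ V = ⊥ := by
    rw [Submodule.eq_bot_iff]
    intro x hx
    by_contra hx0
    exact absurd (hV x hx.2) (not_le.mpr (hW x hx.1 hx0))
  calc finrank ℂ W + finrank ℂ V
      = finrank ℂ ↥(W ⊔ V) + finrank ℂ ↥(W ⊓ V) :=
        (Submodule.finrank_sup_add_finrank_inf_eq W V).symm
    _ = finrank ℂ ↥(W ⊔ V) + 0 := by rw [hdisj, finrank_bot]
    _ ≤ finrank ℂ (EuclideanSpace ℂ ι) := by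
        rw [add_zero]; exact Submodule.finrank_le _
    _ = Fintype.card ι := finrank_euclideanSpace

lemma finrank_add_finrank_le' {W V : Submodule ℂ (EuclideanSpace ℂ ι)}
    (hW : ∀ x ∈ W, x ≠ 0 → q M x < 0) (hV : ∀ x ∈ V, 0 ≤ q M x) :
    finrank ℂ W + finrank ℂ V ≤ Fintype.card ι := by
  have hdisj : W ⊓ V = ⊥ := by
    rw [Submodule.eq_bot_iff]
    intro x hx
    by_contra hx0
    exact absurd (hV x hx.2) (not_le.mpr (hW x hx.1 hx0))
  calc finrank ℂ W + finrank ℂ V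
      = finrank ℂ ↥(W ⊔ V) + finrank ℂ ↥(W ⊓ V) :=
        (Submodule.finrank_sup_add_finrank_inf_eq W V).symm
    _ = finrank ℂ ↥(W ⊔ V) + 0 := by rw [hdisj, finrank_bot]
    _ ≤ finrank ℂ (EuclideanSpace ℂ ι) := by
        rw [add_zero]; exact Submodule.finrank_le _
    _ = Fintype.card ι := finrank_euclideanSpace

lemma card_pos_set : Nat.card {i // 0 < hM.eigenvalues i}
    = Fintype.card {i : ι | 0 < hM.eigenvalues i} := by
  rw [Nat.card_eq_fintype_card]
  exact Fintype.card_congr (Equiv.subtypeEquivRight fun _ => Iff.rfl)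

lemma card_neg_set : Nat.card {i // hM.eigenvalues i < 0}
    = Fintype.card {i : ι | hM.eigenvalues i < 0} := by
  rw [Nat.card_eq_fintype_card]
  exact Fintype.card_congr (Equiv.subtypeEquivRight fun _ => Iff.rfl)

/-- If the form is ≤ 0 on V then n₊ + dim V ≤ card ι. -/
lemma nPos_add_finrank_le {V : Submodule ℂ (EuclideanSpace ℂ ι)}
    (hV : ∀ x ∈ V, q M x ≤ 0) :
    Nat.card {i // 0 < hM.eigenvalues i} + finrank ℂ V ≤ Fintype.card ι := by
  rw [card_pos_set hM, ← finrank_span_image hM.eigenvectorBasis {i : ι | 0 < hM.eigenvalues i}]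
  exact finrank_add_finrank_le
    (fun x hx hx0 => q_pos_on_span hM (fun i hi => hi) hx hx0) hV

/-- If the form is ≥ 0 on V then n₋ + dim V ≤ card ι. -/
lemma nNeg_add_finrank_le {V : Submodule ℂ (EuclideanSpace ℂ ι)}
    (hV : ∀ x ∈ V, 0 ≤ q M x) :
    Nat.card {i // hM.eigenvalues i < 0} + finrank ℂ V ≤ Fintype.card ι := by
  rw [card_neg_set hM, ← finrank_span_image hM.eigenvectorBasis {i : ι | hM.eigenvalues i < 0}]
  exact finrank_add_finrank_le'
    (fun x hx hx0 => q_neg_on_span hM (fun i hi => hi) hx hx0) hV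

/-- If the form is positive definite on W then dim W ≤ n₊. -/
lemma finrank_le_nPos {W : Submodule ℂ (EuclideanSpace ℂ ι)}
    (hW : ∀ x ∈ W, x ≠ 0 → 0 < q M x) :
    finrank ℂ W ≤ Nat.card {i // 0 < hM.eigenvalues i} := by
  have h1 : finrank ℂ W + finrank ℂ (Submodule.span ℂ
      (hM.eigenvectorBasis '' {i : ι | hM.eigenvalues i ≤ 0})) ≤ Fintype.card ι :=
    finrank_add_finrank_le hW (fun x hx => q_nonpos_on_span hM (fun i hi => hi) hx)
  rw [finrank_span_image hM.eigenvectorBasis {i : ι | hM.eigenvalues i ≤ 0}] at h1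
  rw [card_pos_set hM]
  have h2 : Fintype.card {i : ι | hM.eigenvalues i ≤ 0}
      + Fintype.card {i : ι | 0 < hM.eigenvalues i} = Fintype.card ι := by
    have := Fintype.card_subtype_compl (fun i : ι => 0 < hM.eigenvalues i)
    have h3 : Fintype.card {i : ι | hM.eigenvalues i ≤ 0}
        = Fintype.card {i : ι // ¬ 0 < hM.eigenvalues i} :=
      Fintype.card_congr (Equiv.subtypeEquivRight fun _ => ⟨fun h => not_lt.mpr h, fun h => not_lt.mp h⟩)
    have h4 : Fintype.card {i : ι | 0 < hM.eigenvalues i}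
        = Fintype.card {i : ι // 0 < hM.eigenvalues i} :=
      Fintype.card_congr (Equiv.subtypeEquivRight fun _ => Iff.rfl)
    have h5 := Fintype.card_subtype_le (fun i : ι => 0 < hM.eigenvalues i)
    omega
  omega

/-- If the form is negative definite on W then dim W ≤ n₋. -/
lemma finrank_le_nNeg {W : Submodule ℂ (EuclideanSpace ℂ ι)}
    (hW : ∀ x ∈ W, x ≠ 0 → q M x < 0) :
    finrank ℂ W ≤ Nat.card {i // hM.eigenvalues i < 0} := by
  have h1 : finrank ℂ W + finrank ℂ (Submodule.span ℂ
      (hM.eigenvectorBasis '' {i : ι | 0 ≤ hM.eigenvalues i})) ≤ Fintype.card ι :=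
    finrank_add_finrank_le' hW (fun x hx => q_nonneg_on_span hM (fun i hi => hi) hx)
  rw [finrank_span_image hM.eigenvectorBasis {i : ι | 0 ≤ hM.eigenvalues i}] at h1
  rw [card_neg_set hM]
  have h2 : Fintype.card {i : ι | 0 ≤ hM.eigenvalues i}
      + Fintype.card {i : ι | hM.eigenvalues i < 0} = Fintype.card ι := by
    have := Fintype.card_subtype_compl (fun i : ι => hM.eigenvalues i < 0)
    have h3 : Fintype.card {i : ι | 0 ≤ hM.eigenvalues i}
        = Fintype.card {i : ι // ¬ hM.eigenvalues i < 0} :=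
      Fintype.card_congr (Equiv.subtypeEquivRight fun _ => ⟨fun h => not_lt.mpr h, fun h => not_lt.mp h⟩)
    have h4 : Fintype.card {i : ι | hM.eigenvalues i < 0}
        = Fintype.card {i : ι // hM.eigenvalues i < 0} :=
      Fintype.card_congr (Equiv.subtypeEquivRight fun _ => Iff.rfl)
    have h5 := Fintype.card_subtype_le (fun i : ι => hM.eigenvalues i < 0)
    omega
  omega

lemma rank_eq_nPos_add_nNeg : M.rank
    = Nat.card {i // 0 < hM.eigenvalues i} + Nat.card {i // hM.eigenvalues i < 0} := by
  rw [hM.rank_eq_card_non_zero_eigs, Nat.card_eq_fintype_card, Nat.card_eq_fintype_card]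
  rw [← Fintype.card_subtype_or_disjoint (fun i => 0 < hM.eigenvalues i)
    (fun i => hM.eigenvalues i < 0) (fun p hp hn i hi => absurd ((hp i hi).trans (hn i hi)) (lt_irrefl 0))]
  exact Fintype.card_congr (Equiv.subtypeEquivRight fun i => by
    constructor
    · intro h; rcases Ne.lt_or_gt h with h' | h'
      · exact Or.inr h'
      · exact Or.inl h'
    · intro h; rcases h with h' | h'
      · exact h'.ne'
      · exact h'.ne)

end Count

lemma star_dot_mulVec {κ : Type*} [Fintype κ] (B : Matrix ι κ ℂ) (x : ι → ℂ) (y : κ → ℂ) :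
    star x ⬝ᵥ (B *ᵥ y) = star (Bᴴ *ᵥ x) ⬝ᵥ y := by
  rw [star_mulVec, conjTranspose_conjTranspose, dotProduct_mulVec]

lemma norm_repr_sum (b : OrthonormalBasis ι ℂ (EuclideanSpace ℂ ι)) (x : EuclideanSpace ℂ ι) :
    Complex.re (star x ⬝ᵥ x) = ∑ i, Complex.normSq (b.repr x i) := by
  have h1 : (star x ⬝ᵥ x : ℂ) = inner (𝕜 := ℂ) x x := by
    rw [PiLp.inner_apply]
    exact Finset.sum_congr rfl fun i _ => by rw [RCLike.inner_apply]; exact mul_comm _ _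
  rw [h1, ← b.repr.inner_map_map x x, PiLp.inner_apply, Complex.re_sum]
  exact Finset.sum_congr rfl fun i _ => by
    rw [RCLike.inner_apply, Complex.mul_conj, Complex.ofReal_re]

/-- Trace-type bound for a positive semidefinite matrix. -/
lemma exists_psd_bound {A : Matrix ι ι ℂ} (hA : A.PosSemidef) :
    ∃ t : ℝ, 0 ≤ t ∧ ∀ x : ι → ℂ, q A x ≤ t * Complex.re (star x ⬝ᵥ x) := by
  refine ⟨∑ i, hA.1.eigenvalues i, Finset.sum_nonneg fun i _ => hA.eigenvalues_nonneg i, ?_⟩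
  intro x
  have hx1 : q A x = q A (WithLp.toLp 2 x).ofLp := rfl
  have hx2 : Complex.re (star x ⬝ᵥ x)
      = Complex.re (star (WithLp.toLp 2 x).ofLp ⬝ᵥ (WithLp.toLp 2 x).ofLp) := rfl
  rw [hx1, hx2, q_repr_eq hA.1 (WithLp.toLp 2 x),
    norm_repr_sum hA.1.eigenvectorBasis (WithLp.toLp 2 x), Finset.mul_sum]
  apply Finset.sum_le_sum
  intro i _
  apply mul_le_mul_of_nonneg_right _ (Complex.normSq_nonneg _)
  exact Finset.single_le_sum (fun j _ => hA.eigenvalues_nonneg j) (Finset.mem_univ i)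

section Blocks

variable {m n : ℕ} (A : Matrix (Fin m) (Fin m) ℂ) (B : Matrix (Fin m) (Fin n) ℂ)

lemma elim_comp (z : (Fin m ⊕ Fin n) → ℂ) : z = Sum.elim (z ∘ Sum.inl) (z ∘ Sum.inr) :=
  funext fun i => by cases i <;> rfl

lemma q_block (x : Fin m → ℂ) (y : Fin n → ℂ) :
    q (Matrix.fromBlocks A B Bᴴ 0) (Sum.elim x y)
      = Complex.re (star x ⬝ᵥ A *ᵥ x) + Complex.re (star x ⬝ᵥ B *ᵥ y)
        + Complex.re (star y ⬝ᵥ (Bᴴ *ᵥ x)) := by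
  rw [q, fromBlocks_mulVec, Function.star_sumElim, sumElim_dotProduct_sumElim]
  simp [dotProduct_add, Complex.add_re]

end Blocks

end InertiaAux

open InertiaAux

theorem inertia_bordered_psd {m n : ℕ} (A : Matrix (Fin m) (Fin m) ℂ)
    (B : Matrix (Fin m) (Fin n) ℂ) (hA : A.PosSemidef) :
    iPos (Matrix.fromBlocks A B Bᴴ 0) = (Matrix.fromCols A B).rank ∧
    iNeg (Matrix.fromBlocks A B Bᴴ 0) = B.rank ∧
    (Matrix.fromBlocks A B Bᴴ 0).rank = (Matrix.fromCols A B).rank + B.rank := by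
  set M : Matrix (Fin m ⊕ Fin n) (Fin m ⊕ Fin n) ℂ := Matrix.fromBlocks A B Bᴴ 0 with hMdef
  set C : Matrix (Fin m) (Fin m ⊕ Fin n) ℂ := Matrix.fromCols A B with hCdef
  have hM : M.IsHermitian := by
    rw [Matrix.IsHermitian, hMdef, Matrix.fromBlocks_conjTranspose]
    rw [hA.1.eq, Matrix.conjTranspose_conjTranspose, Matrix.conjTranspose_zero]
  have hcard : Fintype.card (Fin m ⊕ Fin n) = m + n := by simp
  have hCH : Cᴴ = Matrix.fromRows Aᴴ Bᴴ :=
    Matrix.conjTranspose_fromCols_eq_fromRows_conjTranspose A B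
  -- the dot product transfer helpers
  -- Part 1: nPos ≤ rank C
  have hle1 : Nat.card {i // 0 < hM.eigenvalues i} ≤ C.rank := by
    set f : ((Fin m ⊕ Fin n) → ℂ) →ₗ[ℂ] ((Fin m ⊕ Fin n) → ℂ) :=
      Cᴴ.mulVecLin ∘ₗ LinearMap.funLeft ℂ ℂ Sum.inl with hfdef
    have hV : ∀ z ∈ LinearMap.ker f, q M z ≤ 0 := by
      intro z hz
      rw [LinearMap.mem_ker, hfdef, LinearMap.comp_apply] at hz
      set x := z ∘ Sum.inl with hxdef
      set y := z ∘ Sum.inr with hydef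
      have hz' : Cᴴ *ᵥ x = 0 := hz
      rw [hCH, Matrix.fromRows_mulVec] at hz'
      have hAx : A *ᵥ x = 0 := by
        rw [← hA.1.eq]
        funext i
        simpa using congrFun hz' (Sum.inl i)
      have hBx : Bᴴ *ᵥ x = 0 := by
        funext i
        simpa using congrFun hz' (Sum.inr i)
      rw [elim_comp z, ← hxdef, ← hydef, hMdef, q_block, hAx, hBx]
      rw [star_dot_mulVec, hBx]
      simp
    have h1 := nPos_add_finrank_le hM
      (V := (LinearMap.ker f).map 
        ((WithLp.linearEquiv 2 ℂ ((Fin m ⊕ Fin n) → ℂ)).symm.toLinearMap :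
          ((Fin m ⊕ Fin n) → ℂ) →ₗ[ℂ] EuclideanSpace ℂ (Fin m ⊕ Fin n)))
      (fun x hx => by obtain ⟨y, hy, rfl⟩ := Submodule.mem_map.mp hx; exact hV _ hy)
    rw [LinearEquiv.finrank_map_eq] at h1
    rw [hcard] at h1
    have h2 := LinearMap.finrank_range_add_finrank_ker f
    have h3 : LinearMap.range f = LinearMap.range Cᴴ.mulVecLin :=
      LinearMap.range_comp_of_range_eq_top _ (LinearMap.range_eq_top.mpr
        (LinearMap.funLeft_surjective_of_injective ℂ ℂ Sum.inl Sum.inl_injective))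
    rw [h3] at h2
    have h4 : Module.finrank ℂ ↥(LinearMap.range Cᴴ.mulVecLin) = C.rank := by
      rw [show Module.finrank ℂ ↥(LinearMap.range Cᴴ.mulVecLin) = Cᴴ.rank from rfl]
      exact Matrix.rank_conjTranspose C
    rw [h4, Module.finrank_fintype_fun_eq_card, hcard] at h2
    have h1' : Nat.card {i // 0 < hM.eigenvalues i}
        + Module.finrank ℂ ↥(LinearMap.ker f) ≤ m + n := h1
    omega
  -- Part 2: rank C ≤ nPos
  have hge1 : C.rank ≤ Nat.card {i // 0 < hM.eigenvalues i} := by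
    set j : (Fin m → ℂ) →ₗ[ℂ] ((Fin m ⊕ Fin n) → ℂ) :=
      (Matrix.fromRows (1 : Matrix (Fin m) (Fin m) ℂ) Bᴴ).mulVecLin with hjdef
    have hj_apply : ∀ x, j x = Sum.elim x (Bᴴ *ᵥ x) := by
      intro x
      rw [hjdef, Matrix.mulVecLin_apply, Matrix.fromRows_mulVec, Matrix.one_mulVec]
    have hj_inj : Function.Injective j := by
      intro a b hab
      funext i
      have := congrFun hab (Sum.inl i)
      rwa [hj_apply, hj_apply] at this
    set W : Submodule ℂ ((Fin m ⊕ Fin n) → ℂ) :=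
      (LinearMap.range C.mulVecLin).map j with hWdef
    have hWrank : Module.finrank ℂ W = C.rank :=
      ((Submodule.equivMapOfInjective j hj_inj _).finrank_eq).symm
    have hW : ∀ z ∈ W, z ≠ 0 → 0 < q M z := by
      intro z hzW hz0
      obtain ⟨x, hxC, rfl⟩ := Submodule.mem_map.mp hzW
      obtain ⟨u, rfl⟩ := LinearMap.mem_range.mp hxC
      set x := C.mulVecLin u with hxdef
      set w := Bᴴ *ᵥ x with hwdef
      have hq : q M (j x) = Complex.re (star x ⬝ᵥ A *ᵥ x)
          + Complex.re (star w ⬝ᵥ w) + Complex.re (star w ⬝ᵥ w) := by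
        rw [hj_apply, hMdef, q_block, ← hwdef]
        rw [star_dot_mulVec B x w, ← hwdef]
      by_contra hq0
      push_neg at hq0
      rw [hq] at hq0
      have ha : (0:ℝ) ≤ Complex.re (star x ⬝ᵥ A *ᵥ x) := by
        have := hA.dotProduct_mulVec_nonneg x
        rw [Complex.le_def] at this
        simpa using this.1
      have hb := re_star_dot_self_nonneg w
      have hw0 : w = 0 := eq_zero_of_re_star_dot_self w (by linarith)
      have hax0 : star x ⬝ᵥ A *ᵥ x = 0 := by
        have h0le := hA.dotProduct_mulVec_nonneg x
        rw [Complex.le_def] at h0le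
        apply Complex.ext
        · simp only [Complex.zero_re]; linarith [h0le.1]
        · simp only [Complex.zero_im]; exact h0le.2.symm
      have hAx : A *ᵥ x = 0 := (hA.dotProduct_mulVec_zero_iff x).mp hax0
      have hCHx : Cᴴ *ᵥ x = 0 := by
        rw [hCH, Matrix.fromRows_mulVec, hA.1.eq, hAx, ← hwdef, hw0]
        funext i; cases i <;> rfl
      have hxu : x = C *ᵥ u := hxdef
      have hx0 : x = 0 := by
        apply eq_zero_of_re_star_dot_self
        have hd : star x ⬝ᵥ x = 0 := by
          nth_rewrite 2 [hxu]
          rw [star_dot_mulVec C x u, hCHx]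
          simp
        rw [hd]
        simp
      apply hz0
      rw [hj_apply, ← hwdef, hw0, hx0]
      funext i; cases i <;> rfl
    have h5 : Module.finrank ℂ ↥W ≤ Nat.card {i // 0 < hM.eigenvalues i} := by
      have := finrank_le_nPos hM
        (W := W.map 
        ((WithLp.linearEquiv 2 ℂ ((Fin m ⊕ Fin n) → ℂ)).symm.toLinearMap :
          ((Fin m ⊕ Fin n) → ℂ) →ₗ[ℂ] EuclideanSpace ℂ (Fin m ⊕ Fin n)))
        (fun x hx hx0 => by
          obtain ⟨y, hy, rfl⟩ := Submodule.mem_map.mp hx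
          exact hW _ hy (fun h => hx0 ((WithLp.ofLp_eq_zero 2).mp h)))
      rwa [LinearEquiv.finrank_map_eq] at this
    rwa [hWrank] at h5
  -- Part 3: nNeg ≤ rank B
  have hle2 : Nat.card {i // hM.eigenvalues i < 0} ≤ B.rank := by
    set f : ((Fin m ⊕ Fin n) → ℂ) →ₗ[ℂ] (Fin m → ℂ) :=
      B.mulVecLin ∘ₗ LinearMap.funLeft ℂ ℂ Sum.inr with hfdef
    have hV : ∀ z ∈ LinearMap.ker f, 0 ≤ q M z := by
      intro z hz
      rw [LinearMap.mem_ker, hfdef, LinearMap.comp_apply] at hz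
      set x := z ∘ Sum.inl with hxdef
      set y := z ∘ Sum.inr with hydef
      have hBy : B *ᵥ y = 0 := hz
      have h3 : star y ⬝ᵥ (Bᴴ *ᵥ x) = 0 := by
        rw [star_dot_mulVec Bᴴ y x, Matrix.conjTranspose_conjTranspose, hBy]
        simp
      rw [elim_comp z, ← hxdef, ← hydef, hMdef, q_block, hBy, h3]
      simp only [dotProduct_zero, Complex.zero_re, add_zero]
      have := hA.dotProduct_mulVec_nonneg x
      rw [Complex.le_def] at this
      simpa using this.1
    have h1 := nNeg_add_finrank_le hM
      (V := (LinearMap.ker f).map 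
        ((WithLp.linearEquiv 2 ℂ ((Fin m ⊕ Fin n) → ℂ)).symm.toLinearMap :
          ((Fin m ⊕ Fin n) → ℂ) →ₗ[ℂ] EuclideanSpace ℂ (Fin m ⊕ Fin n)))
      (fun x hx => by obtain ⟨y, hy, rfl⟩ := Submodule.mem_map.mp hx; exact hV _ hy)
    rw [LinearEquiv.finrank_map_eq] at h1
    rw [hcard] at h1
    have h2 := LinearMap.finrank_range_add_finrank_ker f
    have h3 : LinearMap.range f = LinearMap.range B.mulVecLin :=
      LinearMap.range_comp_of_range_eq_top _ (LinearMap.range_eq_top.mpr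
        (LinearMap.funLeft_surjective_of_injective ℂ ℂ Sum.inr Sum.inr_injective))
    rw [h3, show Module.finrank ℂ ↥(LinearMap.range B.mulVecLin) = B.rank from rfl,
      Module.finrank_fintype_fun_eq_card, hcard] at h2
    have h1' : Nat.card {i // hM.eigenvalues i < 0}
        + Module.finrank ℂ ↥(LinearMap.ker f) ≤ m + n := h1
    omega
  -- Part 4: rank B ≤ nNeg
  have hge2 : B.rank ≤ Nat.card {i // hM.eigenvalues i < 0} := by
    obtain ⟨t, ht0, htb⟩ := exists_psd_bound hA
    set ε : ℝ := (t + 1)⁻¹ with hεdef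
    have hε : 0 < ε := by positivity
    have hεt : ε * t < 2 := by
      have h1 : ε * t < 1 := by
        rw [hεdef, inv_mul_eq_div, div_lt_one (by linarith)]
        linarith
      linarith
    set k : (Fin n → ℂ) →ₗ[ℂ] ((Fin m ⊕ Fin n) → ℂ) :=
      (Matrix.fromRows ((-(ε:ℂ)) • B) (1 : Matrix (Fin n) (Fin n) ℂ)).mulVecLin with hkdef
    have hk_apply : ∀ y, k y = Sum.elim ((-(ε:ℂ)) • (B *ᵥ y)) y := by
      intro y
      rw [hkdef, Matrix.mulVecLin_apply, Matrix.fromRows_mulVec, Matrix.one_mulVec,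
        Matrix.smul_mulVec]
    have hk_inj : Function.Injective k := by
      intro a b hab
      funext i
      have := congrFun hab (Sum.inr i)
      rwa [hk_apply, hk_apply] at this
    set W : Submodule ℂ ((Fin m ⊕ Fin n) → ℂ) :=
      (LinearMap.range Bᴴ.mulVecLin).map k with hWdef
    have hWrank : Module.finrank ℂ W = B.rank := by
      rw [((Submodule.equivMapOfInjective k hk_inj _).finrank_eq).symm,
        show Module.finrank ℂ ↥(LinearMap.range Bᴴ.mulVecLin) = Bᴴ.rank from rfl]
      exact Matrix.rank_conjTranspose B
    have hW : ∀ z ∈ W, z ≠ 0 → q M z < 0 := by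
      intro z hzW hz0
      obtain ⟨y, hyB, rfl⟩ := Submodule.mem_map.mp hzW
      obtain ⟨u, rfl⟩ := LinearMap.mem_range.mp hyB
      set y := Bᴴ.mulVecLin u with hydef
      set w := B *ᵥ y with hwdef
      have hy0 : y ≠ 0 := by
        intro h
        apply hz0
        rw [h, map_zero]
      have hw0 : w ≠ 0 := by
        intro h
        apply hy0
        apply eq_zero_of_re_star_dot_self
        have hyu : y = Bᴴ *ᵥ u := hydef
        have hd : star y ⬝ᵥ y = 0 := by
          nth_rewrite 2 [hyu]
          rw [star_dot_mulVec Bᴴ y u, Matrix.conjTranspose_conjTranspose, ← hwdef, h]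
          simp
        rw [hd]
        simp
      set s : ℝ := Complex.re (star w ⬝ᵥ w) with hsdef
      have hs : 0 < s := by
        rcases (re_star_dot_self_nonneg w).lt_or_eq with h | h
        · exact h
        · exact absurd (eq_zero_of_re_star_dot_self w h.ge) hw0
      have hstarx : star ((-(ε:ℂ)) • w) = (-(ε:ℂ)) • star w := by
        rw [star_smul]
        congr 1
        simp [Complex.star_def, Complex.conj_ofReal]
      have hq : q M (k y) = ε^2 * Complex.re (star w ⬝ᵥ A *ᵥ w) - 2 * ε * s := by
        rw [hk_apply, hMdef, q_block, ← hwdef]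
        have e1 : star ((-(ε:ℂ)) • w) ⬝ᵥ A *ᵥ ((-(ε:ℂ)) • w)
            = ((ε^2 : ℝ) : ℂ) * (star w ⬝ᵥ A *ᵥ w) := by
          rw [hstarx, Matrix.mulVec_smul, smul_dotProduct, dotProduct_smul]
          simp only [smul_eq_mul]
          push_cast
          ring
        have e2 : star ((-(ε:ℂ)) • w) ⬝ᵥ w = ((-ε : ℝ) : ℂ) * (star w ⬝ᵥ w) := by
          rw [hstarx, smul_dotProduct]
          simp only [smul_eq_mul]
          push_cast
          ring
        have e3 : star y ⬝ᵥ (Bᴴ *ᵥ ((-(ε:ℂ)) • w)) = ((-ε : ℝ) : ℂ) * (star w ⬝ᵥ w) := by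
          rw [star_dot_mulVec Bᴴ y ((-(ε:ℂ)) • w), Matrix.conjTranspose_conjTranspose,
            ← hwdef, dotProduct_smul]
          simp only [smul_eq_mul]
          push_cast
          ring
        rw [e1, e2, e3]
        simp only [Complex.re_ofReal_mul]
        rw [← hsdef]
        ring
      rw [hq]
      have hbound : Complex.re (star w ⬝ᵥ A *ᵥ w) ≤ t * s := htb w
      nlinarith [mul_pos hε hs, sq_nonneg ε, mul_le_mul_of_nonneg_left hbound (sq_nonneg ε)]
    have h5 : Module.finrank ℂ ↥W ≤ Nat.card {i // hM.eigenvalues i < 0} := by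
      have := finrank_le_nNeg hM
        (W := W.map 
        ((WithLp.linearEquiv 2 ℂ ((Fin m ⊕ Fin n) → ℂ)).symm.toLinearMap :
          ((Fin m ⊕ Fin n) → ℂ) →ₗ[ℂ] EuclideanSpace ℂ (Fin m ⊕ Fin n)))
        (fun x hx hx0 => by
          obtain ⟨y, hy, rfl⟩ := Submodule.mem_map.mp hx
          exact hW _ hy (fun h => hx0 ((WithLp.ofLp_eq_zero 2).mp h)))
      rwa [LinearEquiv.finrank_map_eq] at this
    rwa [hWrank] at h5
  -- Conclusion
  have key1 : Nat.card {i // 0 < hM.eigenvalues i} = C.rank := le_antisymm hle1 hge1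
  have key2 : Nat.card {i // hM.eigenvalues i < 0} = B.rank := le_antisymm hle2 hge2
  refine ⟨?_, ?_, ?_⟩
  · rw [iPos, dif_pos hM, key1]
  · rw [iNeg, dif_pos hM, key2]
  · rw [rank_eq_nPos_add_nNeg hM, key1, key2]
end

section
/- The block matrix [[A, B],[B*, D]] with Hermitian blocks A, D is positive semidefinite if and only if A is positive semidefinite, the column space of B is contained in the column space of A, and D − B*A†B is positive semidefinite. -/
open Matrix
open scoped ComplexOrder

lemma isMoorePenrose_unique {m n : Type*} [Fintype m] [Fintype n]
    {A : Matrix m n ℂ} {X Y : Matrix n m ℂ}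
    (hX : IsMoorePenrose A X) (hY : IsMoorePenrose A Y) : X = Y := by
  obtain ⟨hX1, hX2, hX3, hX4⟩ := hX
  obtain ⟨hY1, hY2, hY3, hY4⟩ := hY
  have hAX : A * X = A * Y := by
    calc A * X = (A * X)ᴴ := hX3.symm
    _ = ((A * Y * A) * X)ᴴ := by rw [hY1]
    _ = ((A * Y) * (A * X))ᴴ := by rw [Matrix.mul_assoc (A * Y) A X]
    _ = (A * X)ᴴ * (A * Y)ᴴ := by rw [conjTranspose_mul]
    _ = (A * X) * (A * Y) := by rw [hX3, hY3]
    _ = (A * X * A) * Y := by rw [← Matrix.mul_assoc (A * X) A Y]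
    _ = A * Y := by rw [hX1]
  have hXA : X * A = Y * A := by
    calc X * A = (X * A)ᴴ := hX4.symm
    _ = (X * (A * Y * A))ᴴ := by rw [hY1]
    _ = ((X * A) * (Y * A))ᴴ := by
          rw [Matrix.mul_assoc A Y A, ← Matrix.mul_assoc X A (Y * A)]
    _ = (Y * A)ᴴ * (X * A)ᴴ := by rw [conjTranspose_mul]
    _ = (Y * A) * (X * A) := by rw [hX4, hY4]
    _ = Y * (A * X * A) := by rw [Matrix.mul_assoc Y A (X * A), ← Matrix.mul_assoc A X A]
    _ = Y * A := by rw [hX1]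
  calc X = X * A * X := hX2.symm
  _ = X * A * Y := by rw [Matrix.mul_assoc X A X, hAX, ← Matrix.mul_assoc X A Y]
  _ = Y * A * Y := by rw [hXA]
  _ = Y := hY2

lemma isMoorePenrose_unitary_diag {k : Type*} [Fintype k] [DecidableEq k]
    (U : Matrix k k ℂ) (hU : star U * U = 1) (c : k → ℂ) :
    IsMoorePenrose (U * diagonal c * star U) (U * diagonal c⁻¹ * star U) := by
  have key : ∀ (a b : k → ℂ),
      (U * diagonal a * star U) * (U * diagonal b * star U)
        = U * diagonal (a * b) * star U := by
    intro a b
    simp only [Matrix.mul_assoc]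
    rw [← Matrix.mul_assoc (star U) U, hU, Matrix.one_mul,
      ← Matrix.mul_assoc (diagonal a), diagonal_mul_diagonal]
    rfl
  have hct : ∀ (a : k → ℂ), (U * diagonal a * star U)ᴴ = U * diagonal (star a) * star U := by
    intro a
    simp only [conjTranspose_mul, diagonal_conjTranspose, star_eq_conjTranspose,
      conjTranspose_conjTranspose, Matrix.mul_assoc]
  refine ⟨?_, ?_, ?_, ?_⟩
  · rw [key, key, show c * c⁻¹ * c = c from funext fun i => by
      by_cases h : c i = 0 <;>
        simp [Pi.mul_apply, Pi.inv_apply, h]]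
  · rw [key, key, show c⁻¹ * c * c⁻¹ = c⁻¹ from funext fun i => by
      by_cases h : c i = 0 <;>
        simp [Pi.mul_apply, Pi.inv_apply, h]]
  · rw [key, hct, show star (c * c⁻¹) = c * c⁻¹ from funext fun i => by
      by_cases h : c i = 0 <;>
        simp [Pi.mul_apply, Pi.inv_apply, Pi.star_apply, h, mul_inv_cancel₀]]
  · rw [key, hct, show star (c⁻¹ * c) = c⁻¹ * c from funext fun i => by
      by_cases h : c i = 0 <;>
        simp [Pi.mul_apply, Pi.inv_apply, Pi.star_apply, h, inv_mul_cancel₀]]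

lemma exists_isMoorePenrose_s9 {k : ℕ} {A : Matrix (Fin k) (Fin k) ℂ}
    (hA : A.IsHermitian) : ∃ X, IsMoorePenrose A X := by
  set U : Matrix (Fin k) (Fin k) ℂ := (hA.eigenvectorUnitary : Matrix (Fin k) (Fin k) ℂ)
  have hU : star U * U = 1 := mem_unitaryGroup_iff'.mp (hA.eigenvectorUnitary).2
  refine ⟨U * diagonal (RCLike.ofReal ∘ hA.eigenvalues : Fin k → ℂ)⁻¹ * star U, ?_⟩
  have := isMoorePenrose_unitary_diag U hU (RCLike.ofReal ∘ hA.eigenvalues : Fin k → ℂ)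
  convert this using 2
  exact hA.spectral_theorem.trans (Unitary.conjStarAlgAut_apply _ _)

lemma pinv_isMoorePenrose_s9 {k : ℕ} {A : Matrix (Fin k) (Fin k) ℂ}
    (hA : A.IsHermitian) : IsMoorePenrose A (pinv A) := by
  have h : ∃ X, IsMoorePenrose A X := exists_isMoorePenrose_s9 hA
  rw [pinv, dif_pos h]
  exact h.choose_spec

lemma pinv_conjTranspose {k : ℕ} {A : Matrix (Fin k) (Fin k) ℂ}
    (hA : A.IsHermitian) : (pinv A)ᴴ = pinv A := by
  obtain ⟨h1, h2, h3, h4⟩ := pinv_isMoorePenrose_s9 hA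
  set X := pinv A
  have e3 : X ᴴ * A = A * X := by
    conv_lhs => rw [← hA.eq]
    rw [← conjTranspose_mul, h3]
  have e4 : A * Xᴴ = X * A := by
    conv_lhs => rw [← hA.eq]
    rw [← conjTranspose_mul, h4]
  have hXH : IsMoorePenrose A Xᴴ := by
    refine ⟨?_, ?_, ?_, ?_⟩
    · have := congrArg conjTranspose h1
      simp only [conjTranspose_mul, hA.eq] at this
      rw [Matrix.mul_assoc]
      exact this
    · have := congrArg conjTranspose h2
      simp only [conjTranspose_mul, hA.eq] at this
      rw [Matrix.mul_assoc]
      exact this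
    · rw [e4]
      exact h4
    · rw [e3]
      exact h3
  exact isMoorePenrose_unique hXH (pinv_isMoorePenrose_s9 hA)

lemma pinv_comm {k : ℕ} {A : Matrix (Fin k) (Fin k) ℂ}
    (hA : A.IsHermitian) : A * pinv A = pinv A * A := by
  obtain ⟨h1, h2, h3, h4⟩ := pinv_isMoorePenrose_s9 hA
  calc A * pinv A = (A * pinv A)ᴴ := h3.symm
  _ = (pinv A)ᴴ * Aᴴ := conjTranspose_mul _ _
  _ = pinv A * A := by rw [pinv_conjTranspose hA, hA.eq]

lemma matrix_eq_of_mulVec {p q : Type*} [Fintype q] [DecidableEq q]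
    {M N : Matrix p q ℂ} (h : ∀ v, M *ᵥ v = N *ᵥ v) : M = N := by
  ext i j
  have := congrFun (h (Pi.single j 1)) i
  simpa [mulVec_single] using this

lemma star_sum_elim {p q : Type*} (u : p → ℂ) (v : q → ℂ) :
    star (Sum.elim u v) = Sum.elim (star u) (star v) := by
  funext i; cases i <;> rfl

theorem block_posSemidef_iff {m n : ℕ} (A : Matrix (Fin m) (Fin m) ℂ)
    (B : Matrix (Fin m) (Fin n) ℂ) (D : Matrix (Fin n) (Fin n) ℂ)
    (hA : A.IsHermitian) (hD : D.IsHermitian) :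
    (Matrix.fromBlocks A B Bᴴ D).PosSemidef ↔
      A.PosSemidef ∧
      LinearMap.range B.mulVecLin ≤ LinearMap.range A.mulVecLin ∧
      (D - Bᴴ * pinv A * B).PosSemidef := by
  obtain ⟨h1, h2, h3, h4⟩ := pinv_isMoorePenrose_s9 hA
  have hXh := pinv_conjTranspose hA
  have hcm := pinv_comm hA
  set X := pinv A with hX
  constructor
  · intro hM
    have hApsd : A.PosSemidef := by
      have h := hM.submatrix (Sum.inl : Fin m → Fin m ⊕ Fin n)
      have e : (fromBlocks A B Bᴴ D).submatrix Sum.inl Sum.inl = A := by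
        ext i j; simp [submatrix_apply]
      rwa [e] at h
    have hker : ∀ x, A *ᵥ x = 0 → Bᴴ *ᵥ x = 0 := by
      intro x hx
      set y := Bᴴ *ᵥ x with hy
      by_contra hne
      have hr : 0 < star y ⬝ᵥ y := dotProduct_star_self_pos_iff.mpr hne
      have hrre : 0 < (star y ⬝ᵥ y).re := by
        have := (Complex.lt_def.mp hr).1
        simpa using this
      set c : ℂ := star y ⬝ᵥ D *ᵥ y with hc
      set t : ℝ := (c.re + |c.re| + 1) / (2 * (star y ⬝ᵥ y).re) with ht
      have hnum : (0:ℝ) < c.re + |c.re| + 1 := by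
        have := neg_abs_le c.re
        linarith
      have htpos : 0 < t := div_pos hnum (by linarith)
      have hq := hM.dotProduct_mulVec_nonneg (Sum.elim (((-t : ℝ) : ℂ) • x) y)
      have hxy : star x ⬝ᵥ (B *ᵥ y) = star y ⬝ᵥ y := by
        have hsy : star y = star x ᵥ* B := by
          rw [hy, star_mulVec, conjTranspose_conjTranspose]
        rw [dotProduct_mulVec, ← hsy]
      rw [fromBlocks_mulVec, star_sum_elim, sumElim_dotProduct_sumElim] at hq
      simp only [Sum.elim_comp_inl, Sum.elim_comp_inr] at hq
      rw [mulVec_smul, hx, smul_zero, zero_add, mulVec_smul, ← hy] at hq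
      rw [star_smul, smul_dotProduct, dotProduct_add, dotProduct_smul, hxy, ← hc] at hq
      have hre := (Complex.le_def.mp hq).1
      simp only [Complex.star_def, Complex.conj_ofReal, smul_eq_mul,
        Complex.re_ofReal_mul, Complex.add_re, Complex.zero_re] at hre
      have hmul : t * (2 * (star y ⬝ᵥ y).re) = c.re + |c.re| + 1 := by
        rw [ht]
        exact div_mul_cancel₀ _ (ne_of_gt (by linarith))
      have hmul' : 2 * (t * (star y ⬝ᵥ y).re) = c.re + |c.re| + 1 := by
        rw [← hmul]; ring
      have habs : 0 ≤ |c.re| := abs_nonneg _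
      linarith
    have hzeroBC : Bᴴ * (1 - X * A) = 0 := by
      apply matrix_eq_of_mulVec
      intro v
      rw [zero_mulVec, ← mulVec_mulVec]
      apply hker
      rw [mulVec_mulVec, Matrix.mul_sub, Matrix.mul_one, ← Matrix.mul_assoc, h1, sub_self,
        zero_mulVec]
    have hB1 : X * A * B = B := by
      have h' := congrArg conjTranspose hzeroBC
      rw [conjTranspose_mul, conjTranspose_zero, conjTranspose_conjTranspose,
        conjTranspose_sub, conjTranspose_one, h4, Matrix.sub_mul, Matrix.one_mul] at h'
      have := sub_eq_zero.mp h'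
      rw [← this]
    have hB3 : A * X * B = B := by rw [hcm]; exact hB1
    have hB2 : Bᴴ * X * A = Bᴴ := by
      have h' := congrArg conjTranspose hB3
      simp only [conjTranspose_mul, hXh, hA.eq] at h'
      rw [Matrix.mul_assoc]
      exact h'
    refine ⟨hApsd, ?_, ?_⟩
    · rintro v ⟨w, rfl⟩
      refine ⟨(X * B) *ᵥ w, ?_⟩
      simp only [mulVecLin_apply]
      rw [mulVec_mulVec, ← Matrix.mul_assoc, hB3]
    · have hcong := hM.conjTranspose_mul_mul_same
        (fromBlocks 1 (-(X * B)) (0 : Matrix (Fin n) (Fin m) ℂ) 1)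
      have hPMP : (fromBlocks 1 (-(X * B)) (0 : Matrix (Fin n) (Fin m) ℂ) 1)ᴴ *
          (fromBlocks A B Bᴴ D) * (fromBlocks 1 (-(X * B)) 0 1)
          = fromBlocks A 0 0 (D - Bᴴ * X * B) := by
        have e3 : A * (X * B) = B := by rw [← Matrix.mul_assoc]; exact hB3
        have e2 : Bᴴ * (X * A) = Bᴴ := by rw [← Matrix.mul_assoc]; exact hB2
        rw [fromBlocks_conjTranspose, fromBlocks_multiply, fromBlocks_multiply,
          fromBlocks_inj]
        refine ⟨?_, ?_, ?_, ?_⟩ <;>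
          simp only [conjTranspose_one, conjTranspose_zero, conjTranspose_neg,
            conjTranspose_mul, hXh, Matrix.one_mul, Matrix.mul_one, Matrix.zero_mul,
            Matrix.mul_zero, add_zero, zero_add, Matrix.neg_mul, Matrix.mul_neg, neg_neg,
            Matrix.mul_assoc, e2, e3, neg_add_cancel, Matrix.zero_mul] <;>
          abel
      rw [hPMP] at hcong
      have hsub := hcong.submatrix (Sum.inr : Fin n → Fin m ⊕ Fin n)
      have e : (fromBlocks A 0 0 (D - Bᴴ * X * B)).submatrix Sum.inr Sum.inr
          = D - Bᴴ * X * B := by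
        ext i j; simp [submatrix_apply]
      rwa [e] at hsub
  · rintro ⟨hApsd, hrange, hS⟩
    have hB3 : A * X * B = B := by
      apply matrix_eq_of_mulVec
      intro v
      obtain ⟨w, hw⟩ := hrange ⟨v, rfl⟩
      simp only [mulVecLin_apply] at hw
      calc (A * X * B) *ᵥ v = (A * X) *ᵥ (B *ᵥ v) := by rw [← mulVec_mulVec]
      _ = (A * X) *ᵥ (A *ᵥ w) := by rw [hw]
      _ = (A * X * A) *ᵥ w := by rw [mulVec_mulVec]
      _ = A *ᵥ w := by rw [h1]
      _ = B *ᵥ v := hw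
    have hB2 : Bᴴ * X * A = Bᴴ := by
      have h' := congrArg conjTranspose hB3
      simp only [conjTranspose_mul, hXh, hA.eq] at h'
      rw [Matrix.mul_assoc]
      exact h'
    have hN : (fromBlocks A (0 : Matrix (Fin m) (Fin n) ℂ) 0 (D - Bᴴ * X * B)).PosSemidef := by
      apply PosSemidef.of_dotProduct_mulVec_nonneg
      · show _ᴴ = _
        simp only [fromBlocks_conjTranspose, conjTranspose_zero, hApsd.1.eq, hS.1.eq]
      · intro x
        have hx : Sum.elim (x ∘ Sum.inl) (x ∘ Sum.inr) = x := Sum.elim_comp_inl_inr x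
        rw [← hx, fromBlocks_mulVec, star_sum_elim, sumElim_dotProduct_sumElim]
        simp only [zero_mulVec, add_zero, zero_add]
        exact add_nonneg (hApsd.dotProduct_mulVec_nonneg _) (hS.dotProduct_mulVec_nonneg _)
    have hQNQ : (fromBlocks 1 (X * B) (0 : Matrix (Fin n) (Fin m) ℂ) 1)ᴴ *
        (fromBlocks A 0 0 (D - Bᴴ * X * B)) * (fromBlocks 1 (X * B) 0 1)
        = fromBlocks A B Bᴴ D := by
      have e3 : A * (X * B) = B := by rw [← Matrix.mul_assoc]; exact hB3
      have e2 : Bᴴ * (X * A) = Bᴴ := by rw [← Matrix.mul_assoc]; exact hB2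
      rw [fromBlocks_conjTranspose, fromBlocks_multiply, fromBlocks_multiply,
        fromBlocks_inj]
      refine ⟨?_, ?_, ?_, ?_⟩ <;>
        simp only [conjTranspose_one, conjTranspose_zero, conjTranspose_neg,
          conjTranspose_mul, hXh, Matrix.one_mul, Matrix.mul_one, Matrix.zero_mul,
          Matrix.mul_zero, add_zero, zero_add, Matrix.neg_mul, Matrix.mul_neg, neg_neg,
          Matrix.mul_assoc, e2, e3, neg_add_cancel, Matrix.zero_mul] <;>
        abel
    have := hN.conjTranspose_mul_mul_same (fromBlocks 1 (X * B) (0 : Matrix (Fin n) (Fin m) ℂ) 1)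
    rwa [hQNQ] at this
end

section
/- For A ∈ ℂ^{m×n} and Hermitian B ∈ ℂ^{m×m}, the equation AXA* = B has a positive semidefinite solution X if and only if B is positive semidefinite and the column space of B is contained in the column space of A. When this holds, X = A†B(A†)* + (I − A†A)UU*(I − A†A) is such a solution for every U ∈ ℂ^{n×n}. -/
open Matrix
open scoped ComplexOrder

private lemma mulVec_ext {a b : ℕ} {M N : Matrix (Fin a) (Fin b) ℂ}
    (h : ∀ v, M *ᵥ v = N *ᵥ v) : M = N := by
  ext i j
  have := congr_fun (h (Pi.single j 1)) i
  simpa [mulVec_single] using this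

private lemma herm_pinv_exists {k : ℕ} (H : Matrix (Fin k) (Fin k) ℂ) (hH : H.IsHermitian) :
    ∃ P : Matrix (Fin k) (Fin k) ℂ,
      H * P * H = H ∧ P * H * P = P ∧ Pᴴ = P ∧ H * P = P * H := by
  set V : Matrix (Fin k) (Fin k) ℂ := (hH.eigenvectorUnitary : Matrix (Fin k) (Fin k) ℂ) with hV
  have hVV : Vᴴ * V = 1 := by
    simpa [star_eq_conjTranspose] using (mem_unitaryGroup_iff'.mp hH.eigenvectorUnitary.2)
  set d : Fin k → ℂ := fun i => ((hH.eigenvalues i : ℝ) : ℂ) with hd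
  set e : Fin k → ℂ :=
    (fun i => if hH.eigenvalues i = 0 then 0 else (((hH.eigenvalues i : ℝ) : ℂ))⁻¹) with he
  have hspec : H = V * diagonal d * Vᴴ := by
    exact hH.spectral_theorem
  have key : ∀ f g : Fin k → ℂ,
      (V * diagonal f * Vᴴ) * (V * diagonal g * Vᴴ) = V * diagonal (f * g) * Vᴴ := by
    intro f g
    simp only [Matrix.mul_assoc]
    rw [← Matrix.mul_assoc Vᴴ V, hVV, Matrix.one_mul, ← Matrix.mul_assoc (diagonal f),
      diagonal_mul_diagonal]
    rfl
  have hded : d * e * d = d := by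
    funext i
    by_cases h0 : hH.eigenvalues i = 0
    · simp [hd, he, h0]
    · have : ((hH.eigenvalues i : ℝ) : ℂ) ≠ 0 := by exact_mod_cast Complex.ofReal_ne_zero.mpr h0
      simp [hd, he, h0, this]
  have hede : e * d * e = e := by
    funext i
    by_cases h0 : hH.eigenvalues i = 0
    · simp [hd, he, h0]
    · have : ((hH.eigenvalues i : ℝ) : ℂ) ≠ 0 := by exact_mod_cast Complex.ofReal_ne_zero.mpr h0
      simp [hd, he, h0, this]
  refine ⟨V * diagonal e * Vᴴ, ?_, ?_, ?_, ?_⟩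
  · rw [hspec, key, key, hded]
  · rw [hspec, key, key, hede]
  · have hstar : star e = e := by
      funext i
      by_cases h0 : hH.eigenvalues i = 0
      · simp [he, h0]
      · simp [he, h0, ← Complex.ofReal_inv]
    simp only [conjTranspose_mul, conjTranspose_conjTranspose, diagonal_conjTranspose, hstar]
    rw [Matrix.mul_assoc]
  · rw [hspec, key, key, mul_comm d e]

private lemma mp_exists {m n : ℕ} (A : Matrix (Fin m) (Fin n) ℂ) :
    ∃ X, IsMoorePenrose A X := by
  obtain ⟨P, hP1, hP2, hP3, hP4⟩ := herm_pinv_exists (Aᴴ * A) (isHermitian_conjTranspose_mul_self A)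
  have hker : ∀ w : Fin n → ℂ, (Aᴴ * A) *ᵥ w = 0 → A *ᵥ w = 0 := by
    intro w hw
    have h0 : star (A *ᵥ w) ⬝ᵥ (A *ᵥ w) = 0 := by
      rw [star_mulVec, ← dotProduct_mulVec, mulVec_mulVec, hw, dotProduct_zero]
    exact dotProduct_star_self_eq_zero.mp h0
  have hz : A * (1 - P * (Aᴴ * A)) = 0 := by
    apply mulVec_ext
    intro v
    rw [← mulVec_mulVec, Matrix.zero_mulVec]
    apply hker
    rw [mulVec_mulVec, Matrix.mul_sub, Matrix.mul_one, ← Matrix.mul_assoc, hP1, sub_self,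
      Matrix.zero_mulVec]
  have hA : A * (P * (Aᴴ * A)) = A := by
    rw [Matrix.mul_sub, Matrix.mul_one, sub_eq_zero] at hz
    exact hz.symm
  refine ⟨P * Aᴴ, ?_, ?_, ?_, ?_⟩
  · calc A * (P * Aᴴ) * A = A * (P * (Aᴴ * A)) := by
          simp only [Matrix.mul_assoc]
      _ = A := hA
  · calc P * Aᴴ * A * (P * Aᴴ) = (P * (Aᴴ * A) * P) * Aᴴ := by
          simp only [Matrix.mul_assoc]
      _ = P * Aᴴ := by rw [hP2]
  · calc (A * (P * Aᴴ))ᴴ = A * (Pᴴ * Aᴴ) := by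
          simp only [conjTranspose_mul, conjTranspose_conjTranspose, Matrix.mul_assoc]
      _ = A * (P * Aᴴ) := by rw [hP3]
  · calc (P * Aᴴ * A)ᴴ = (Aᴴ * A)ᴴ * Pᴴ := by
          simp only [conjTranspose_mul, conjTranspose_conjTranspose, Matrix.mul_assoc]
      _ = (Aᴴ * A) * P := by rw [hP3, (isHermitian_conjTranspose_mul_self A).eq]
      _ = P * (Aᴴ * A) := hP4
      _ = P * Aᴴ * A := by rw [Matrix.mul_assoc]

theorem psd_solution_AXAstar_eq_B {m n : ℕ} (A : Matrix (Fin m) (Fin n) ℂ)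
    (B : Matrix (Fin m) (Fin m) ℂ) (hB : B.IsHermitian) :
    ((∃ X : Matrix (Fin n) (Fin n) ℂ, X.PosSemidef ∧ A * X * Aᴴ = B) ↔
      (B.PosSemidef ∧ LinearMap.range B.mulVecLin ≤ LinearMap.range A.mulVecLin)) ∧
    ((B.PosSemidef ∧ LinearMap.range B.mulVecLin ≤ LinearMap.range A.mulVecLin) →
      ∀ U : Matrix (Fin n) (Fin n) ℂ,
        (pinv A * B * (pinv A)ᴴ + (1 - pinv A * A) * (U * Uᴴ) * (1 - pinv A * A)).PosSemidef ∧
        A * (pinv A * B * (pinv A)ᴴ + (1 - pinv A * A) * (U * Uᴴ) * (1 - pinv A * A)) * Aᴴ = B) := by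
  have hex : ∃ X, IsMoorePenrose A X := mp_exists A
  have hMP : IsMoorePenrose A (pinv A) := by
    rw [pinv, dif_pos hex]
    exact hex.choose_spec
  obtain ⟨h1, h2, h3, h4⟩ := hMP
  set P := pinv A with hPdef
  -- second part
  have main : (B.PosSemidef ∧ LinearMap.range B.mulVecLin ≤ LinearMap.range A.mulVecLin) →
      ∀ U : Matrix (Fin n) (Fin n) ℂ,
        (P * B * Pᴴ + (1 - P * A) * (U * Uᴴ) * (1 - P * A)).PosSemidef ∧
        A * (P * B * Pᴴ + (1 - P * A) * (U * Uᴴ) * (1 - P * A)) * Aᴴ = B := by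
    rintro ⟨hBpsd, hrange⟩ U
    have hPAH : (1 - P * A)ᴴ = 1 - P * A := by
      rw [conjTranspose_sub, conjTranspose_one, h4]
    have hAPB : A * P * B = B := by
      apply mulVec_ext
      intro v
      obtain ⟨w, hw⟩ := hrange ⟨v, rfl⟩
      simp only [mulVecLin_apply] at hw
      rw [← mulVec_mulVec, ← hw, mulVec_mulVec, h1]
    have hBAP : B * (A * P) = B := by
      calc B * (A * P) = Bᴴ * (A * P)ᴴ := by rw [hB.eq, h3]
        _ = (A * P * B)ᴴ := (conjTranspose_mul _ _).symm
        _ = B := by rw [hAPB, hB.eq]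
    constructor
    · apply PosSemidef.add
      · exact hBpsd.mul_mul_conjTranspose_same P
      · have := (posSemidef_self_mul_conjTranspose U).mul_mul_conjTranspose_same (1 - P * A)
        rwa [hPAH] at this
    · have hA0 : A * (1 - P * A) = 0 := by
        rw [Matrix.mul_sub, Matrix.mul_one, ← Matrix.mul_assoc, h1, sub_self]
      rw [Matrix.mul_add, Matrix.add_mul]
      have hterm2 : A * ((1 - P * A) * (U * Uᴴ) * (1 - P * A)) * Aᴴ = 0 := by
        rw [← Matrix.mul_assoc, ← Matrix.mul_assoc, ← Matrix.mul_assoc, hA0,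
          Matrix.zero_mul, Matrix.zero_mul, Matrix.zero_mul, Matrix.zero_mul]
      rw [hterm2, add_zero]
      have hPAH2 : Pᴴ * Aᴴ = A * P := by
        rw [← conjTranspose_mul, h3]
      calc A * (P * B * Pᴴ) * Aᴴ = A * P * B * (Pᴴ * Aᴴ) := by
            simp only [Matrix.mul_assoc]
        _ = A * P * B * (A * P) := by rw [hPAH2]
        _ = B * (A * P) := by rw [hAPB]
        _ = B := hBAP
  refine ⟨⟨?_, ?_⟩, main⟩
  · rintro ⟨X, hX, hXB⟩
    constructor
    · rw [← hXB]; exact hX.mul_mul_conjTranspose_same A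
    · rw [← hXB, Matrix.mul_assoc, mulVecLin_mul]
      exact LinearMap.range_comp_le_range _ _
  · intro h
    exact ⟨_, main h 0⟩
end

section
/- Let A ∈ ℂ^{m×m} be Hermitian positive semidefinite and B ∈ ℂ^{m×n}. There exists a Hermitian X ∈ ℂ^{n×n} with BXB* ⪰ A if and only if the column space of A is contained in the column space of B; and in this case X = B†A(B†)* + UU* is such a solution for every U ∈ ℂ^{n×n}. -/
open Matrix
open scoped ComplexOrder

section aux

variable {m n : Type*} [Fintype m] [Fintype n] [DecidableEq m] [DecidableEq n]

/-- Moore-Penrose inverse for a Hermitian matrix, with extra properties. -/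
lemma exists_mp_hermitian (H : Matrix n n ℂ) (hH : H.IsHermitian) :
    ∃ G : Matrix n n ℂ, IsMoorePenrose H G ∧ G.IsHermitian ∧ H * G = G * H := by
  set V : Matrix n n ℂ := (hH.eigenvectorUnitary : Matrix n n ℂ) with hV
  have hV1 : star V * V = 1 := mem_unitaryGroup_iff'.mp (hH.eigenvectorUnitary).2
  set d : n → ℂ := RCLike.ofReal ∘ hH.eigenvalues with hd
  set e : n → ℂ := fun i => (d i)⁻¹ with he
  have hspec : H = V * diagonal d * star V := hH.spectral_theorem
  have hsd : star d = d := by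
    funext i
    simp [hd, Complex.star_def, Complex.conj_ofReal]
  have hse : star e = e := by
    funext i
    simp only [Pi.star_apply, he, star_inv₀]
    rw [show star (d i) = d i from congrFun hsd i]
  have sandwich : ∀ P Q : Matrix n n ℂ,
      (V * P * star V) * (V * Q * star V) = V * (P * Q) * star V := by
    intro P Q
    calc (V * P * star V) * (V * Q * star V)
        = V * (P * ((star V * V) * (Q * star V))) := by
          simp only [Matrix.mul_assoc]
      _ = V * (P * Q) * star V := by
          rw [hV1, Matrix.one_mul]; simp only [Matrix.mul_assoc]
  have hstar_diag_e : (diagonal e)ᴴ = diagonal e := by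
    rw [diagonal_conjTranspose, hse]
  have hstar_diag_d : (diagonal d)ᴴ = diagonal d := by
    rw [diagonal_conjTranspose, hsd]
  have hfun1 : (fun i => d i * e i * d i) = d := by
    funext i
    rcases eq_or_ne (d i) 0 with h0 | h0
    · simp [h0]
    · simp only [he]
      field_simp
  have hfun2 : (fun i => e i * d i * e i) = e := by
    funext i
    rcases eq_or_ne (d i) 0 with h0 | h0
    · simp [he, h0]
    · simp only [he]
      field_simp
  have hde : diagonal d * diagonal e * diagonal d = diagonal d := by
    rw [diagonal_mul_diagonal, diagonal_mul_diagonal, hfun1]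
  have hed : diagonal e * diagonal d * diagonal e = diagonal e := by
    rw [diagonal_mul_diagonal, diagonal_mul_diagonal, hfun2]
  have hcomm : diagonal d * diagonal e = diagonal e * diagonal d := by
    rw [diagonal_mul_diagonal, diagonal_mul_diagonal]
    have : (fun i => d i * e i) = fun i => e i * d i := by
      funext i; ring
    rw [this]
  have hGherm : (V * diagonal e * star V).IsHermitian := by
    unfold IsHermitian
    rw [star_eq_conjTranspose]
    simp only [conjTranspose_mul, conjTranspose_conjTranspose, hstar_diag_e]
    rw [Matrix.mul_assoc]
  have hHGcomm : H * (V * diagonal e * star V) = (V * diagonal e * star V) * H := by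
    rw [hspec, sandwich, sandwich, hcomm]
  refine ⟨V * diagonal e * star V, ⟨?_, ?_, ?_, ?_⟩, hGherm, hHGcomm⟩
  · rw [hspec, sandwich, sandwich, hde]
  · rw [hspec, sandwich, sandwich, hed]
  · rw [conjTranspose_mul, hGherm.eq, hH.eq, hHGcomm]
  · rw [conjTranspose_mul, hGherm.eq, hH.eq, hHGcomm]

lemma exists_mp (B : Matrix m n ℂ) : ∃ X, IsMoorePenrose B X := by
  obtain ⟨G, ⟨hG1, hG2, _hG3, _hG4⟩, hGh, hGc⟩ :=
    exists_mp_hermitian (Bᴴ * B) (isHermitian_conjTranspose_mul_self B)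
  have key : B * G * (Bᴴ * B) = B := by
    have h0 : Bᴴ * B * (G * (Bᴴ * B) - 1) = 0 := by
      rw [Matrix.mul_sub, Matrix.mul_one, ← Matrix.mul_assoc, hG1, sub_self]
    have h1 : (B * (G * (Bᴴ * B) - 1))ᴴ * (B * (G * (Bᴴ * B) - 1)) = 0 := by
      rw [conjTranspose_mul, Matrix.mul_assoc, ← Matrix.mul_assoc Bᴴ, h0,
        Matrix.mul_zero]
    have h2 : B * (G * (Bᴴ * B) - 1) = 0 := conjTranspose_mul_self_eq_zero.mp h1
    rw [Matrix.mul_sub, Matrix.mul_one, ← Matrix.mul_assoc, sub_eq_zero] at h2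
    exact h2
  refine ⟨G * Bᴴ, ?_, ?_, ?_, ?_⟩
  · calc B * (G * Bᴴ) * B = B * G * (Bᴴ * B) := by simp only [Matrix.mul_assoc]
      _ = B := key
  · calc G * Bᴴ * B * (G * Bᴴ) = G * (Bᴴ * B) * G * Bᴴ := by
          simp only [Matrix.mul_assoc]
      _ = G * Bᴴ := by rw [hG2]
  · have h : B * (G * Bᴴ) = B * G * Bᴴ := by simp only [Matrix.mul_assoc]
    rw [h]
    simp only [conjTranspose_mul, conjTranspose_conjTranspose, hGh.eq]
    simp only [Matrix.mul_assoc]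
  · have h : G * Bᴴ * B = G * (Bᴴ * B) := by simp only [Matrix.mul_assoc]
    rw [h]
    simp only [conjTranspose_mul, conjTranspose_conjTranspose, hGh.eq,
      (isHermitian_conjTranspose_mul_self B).eq]
    exact hGc

lemma neg_psd_zero (C : Matrix m n ℂ) (h : (-(Cᴴ * C)).PosSemidef) : C = 0 := by
  have hmv : ∀ x : n → ℂ, C *ᵥ x = 0 := by
    intro x
    have h1 : 0 ≤ star x ⬝ᵥ ((Cᴴ * C) *ᵥ x) := (posSemidef_conjTranspose_mul_self C).dotProduct_mulVec_nonneg x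
    have h2 : 0 ≤ star x ⬝ᵥ ((-(Cᴴ * C)) *ᵥ x) := h.dotProduct_mulVec_nonneg x
    rw [Matrix.neg_mulVec, dotProduct_neg, le_neg, neg_zero] at h2
    have h3 : star x ⬝ᵥ ((Cᴴ * C) *ᵥ x) = 0 := le_antisymm h2 h1
    have h4 : star (C *ᵥ x) ⬝ᵥ (C *ᵥ x) = 0 := by
      rw [star_mulVec, ← Matrix.dotProduct_mulVec, Matrix.mulVec_mulVec]
      exact h3
    exact dotProduct_star_self_eq_zero.mp h4
  ext i j
  have h5 := congrFun (hmv (Pi.single j 1)) i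
  rw [mulVec_single] at h5
  simpa using h5

open scoped MatrixOrder in
lemma psd_sqrt_exists {m : Type*} [Fintype m] [DecidableEq m] (A : Matrix m m ℂ) (hA : A.PosSemidef) :
    ∃ S : Matrix m m ℂ, S.IsHermitian ∧ S * S = A :=
  ⟨CFC.sqrt A, (CFC.sqrt_nonneg A).posSemidef.1, CFC.sqrt_mul_sqrt_self A hA.nonneg⟩

end aux

theorem lmi_solvability_psd {m n : ℕ} (A : Matrix (Fin m) (Fin m) ℂ)
    (B : Matrix (Fin m) (Fin n) ℂ) (hA : A.PosSemidef) :
    ((∃ X : Matrix (Fin n) (Fin n) ℂ, X.IsHermitian ∧ (B * X * Bᴴ - A).PosSemidef) ↔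
      LinearMap.range A.mulVecLin ≤ LinearMap.range B.mulVecLin) ∧
    (LinearMap.range A.mulVecLin ≤ LinearMap.range B.mulVecLin →
      ∀ U : Matrix (Fin n) (Fin n) ℂ,
        (pinv B * A * (pinv B)ᴴ + U * Uᴴ).IsHermitian ∧
        (B * (pinv B * A * (pinv B)ᴴ + U * Uᴴ) * Bᴴ - A).PosSemidef) := by
  have hBp : IsMoorePenrose B (pinv B) := by
    have h := exists_mp B
    rw [pinv, dif_pos h]
    exact h.choose_spec
  have hPB : B * pinv B * B = B := hBp.1
  have hPH : (B * pinv B)ᴴ = B * pinv B := hBp.2.2.1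
  have hA' : Aᴴ = A := hA.1
  -- range condition implies the projection identity
  have key : LinearMap.range A.mulVecLin ≤ LinearMap.range B.mulVecLin →
      B * pinv B * A = A := by
    intro hr
    have hcol : ∀ j, (B * pinv B * A) *ᵥ Pi.single j 1 = A *ᵥ Pi.single j 1 := by
      intro j
      obtain ⟨w, hw⟩ := hr (LinearMap.mem_range_self A.mulVecLin (Pi.single j 1))
      have hw' : B *ᵥ w = A *ᵥ Pi.single j 1 := by simpa using hw
      calc (B * pinv B * A) *ᵥ Pi.single j 1
          = (B * pinv B) *ᵥ (A *ᵥ Pi.single j 1) := by rw [mulVec_mulVec]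
        _ = (B * pinv B) *ᵥ (B *ᵥ w) := by rw [hw']
        _ = (B * pinv B * B) *ᵥ w := by rw [mulVec_mulVec]
        _ = B *ᵥ w := by rw [hPB]
        _ = A *ᵥ Pi.single j 1 := hw'
    ext i j
    have h5 := congrFun (hcol j) i
    simpa [mulVec_single] using h5
  have part2 : LinearMap.range A.mulVecLin ≤ LinearMap.range B.mulVecLin →
      ∀ U : Matrix (Fin n) (Fin n) ℂ,
        (pinv B * A * (pinv B)ᴴ + U * Uᴴ).IsHermitian ∧
        (B * (pinv B * A * (pinv B)ᴴ + U * Uᴴ) * Bᴴ - A).PosSemidef := by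
    intro hr U
    have hPA := key hr
    have hAP : A * (B * pinv B) = A := by
      calc A * (B * pinv B)
          = ((B * pinv B)ᴴ * Aᴴ)ᴴ := by
            rw [conjTranspose_mul, conjTranspose_conjTranspose,
              conjTranspose_conjTranspose]
        _ = ((B * pinv B) * A)ᴴ := by rw [hPH, hA']
        _ = Aᴴ := by rw [hPA]
        _ = A := hA'
    constructor
    · apply IsHermitian.add
      · unfold IsHermitian
        simp only [conjTranspose_mul, conjTranspose_conjTranspose, hA',
          Matrix.mul_assoc]
      · exact isHermitian_mul_conjTranspose_self U
    · have hexp : B * (pinv B * A * (pinv B)ᴴ + U * Uᴴ) * Bᴴ - A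
          = (B * U) * (B * U)ᴴ := by
        rw [Matrix.mul_add, Matrix.add_mul]
        have t1 : B * (pinv B * A * (pinv B)ᴴ) * Bᴴ = A := by
          calc B * (pinv B * A * (pinv B)ᴴ) * Bᴴ
              = (B * pinv B * A) * (B * pinv B)ᴴ := by
                rw [conjTranspose_mul]; simp only [Matrix.mul_assoc]
            _ = A * (B * pinv B) := by rw [hPA, hPH]
            _ = A := hAP
        have t2 : B * (U * Uᴴ) * Bᴴ = (B * U) * (B * U)ᴴ := by
          rw [conjTranspose_mul]; simp only [Matrix.mul_assoc]
        rw [t1, t2, add_sub_cancel_left]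
      rw [hexp]
      exact posSemidef_self_mul_conjTranspose (B * U)
  refine ⟨⟨?_, fun hr => ⟨_, (part2 hr 0).1, (part2 hr 0).2⟩⟩, part2⟩
  rintro ⟨X, _, hpsd⟩
  set Q : Matrix (Fin m) (Fin m) ℂ := 1 - B * pinv B with hQ
  have hQB : Q * B = 0 := by
    rw [hQ, Matrix.sub_mul, Matrix.one_mul, hPB, sub_self]
  have hQH : Qᴴ = Q := by
    rw [hQ, conjTranspose_sub, conjTranspose_one, hPH]
  have hQpsd : (Q * (B * X * Bᴴ - A) * Qᴴ).PosSemidef :=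
    hpsd.mul_mul_conjTranspose_same Q
  obtain ⟨S, hSh, hSS⟩ := psd_sqrt_exists A hA
  have hQexp : Q * (B * X * Bᴴ - A) * Qᴴ
      = -((S * Q)ᴴ * (S * Q)) := by
    rw [Matrix.mul_sub, Matrix.sub_mul]
    have h0 : Q * (B * X * Bᴴ) = 0 := by
      simp only [← Matrix.mul_assoc]
      rw [hQB, Matrix.zero_mul, Matrix.zero_mul]
    rw [h0, Matrix.zero_mul, zero_sub]
    congr 1
    calc Q * A * Qᴴ
        = Q * (S * S) * Q := by rw [hSS, hQH]
      _ = (S * Q)ᴴ * (S * Q) := by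
          rw [conjTranspose_mul, hSh.eq, hQH]
          simp only [Matrix.mul_assoc]
  have hC : S * Q = 0 := by
    apply neg_psd_zero
    rw [← hQexp]
    exact hQpsd
  have hAQ : A * Q = 0 := by
    rw [← hSS, Matrix.mul_assoc, hC, Matrix.mul_zero]
  have hQA : Q * A = 0 := by
    have h6 := congrArg conjTranspose hAQ
    rwa [conjTranspose_mul, hQH, hA', conjTranspose_zero] at h6
  have hPA : B * pinv B * A = A := by
    rw [hQ, Matrix.sub_mul, Matrix.one_mul, sub_eq_zero] at hQA
    exact hQA.symm
  rintro v ⟨u, rfl⟩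
  refine ⟨(pinv B * A) *ᵥ u, ?_⟩
  show B *ᵥ ((pinv B * A) *ᵥ u) = A *ᵥ u
  rw [mulVec_mulVec, ← Matrix.mul_assoc, hPA]
end

section
/- Let A ∈ ℂ^{m×m} be Hermitian positive semidefinite and B ∈ ℂ^{m×n}. There exists a Hermitian X ∈ ℂ^{n×n} with BXB* ≻ A (positive definite difference) if and only if rank(B) = m. -/
open Matrix
open scoped ComplexOrder

theorem lmi_strict_solvability_psd {m n : ℕ} (A : Matrix (Fin m) (Fin m) ℂ)
    (B : Matrix (Fin m) (Fin n) ℂ) (hA : A.PosSemidef) :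
    (∃ X : Matrix (Fin n) (Fin n) ℂ, X.IsHermitian ∧ (B * X * Bᴴ - A).PosDef) ↔
      B.rank = m := by
  constructor
  · rintro ⟨X, hX, hP⟩
    have hBXB : (B * X * Bᴴ).PosDef := by
      have := hP.add_posSemidef hA
      simpa using this
    have hUnit : IsUnit (B * X * Bᴴ) := hBXB.isUnit
    have hrank : (B * X * Bᴴ).rank = m := by
      rw [Matrix.rank_of_isUnit _ hUnit, Fintype.card_fin]
    refine le_antisymm (B.rank_le_height) ?_
    calc m = (B * X * Bᴴ).rank := hrank.symm
      _ ≤ (B * X).rank := Matrix.rank_mul_le_left _ _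
      _ ≤ B.rank := Matrix.rank_mul_le_left _ _
  · intro hr
    -- Bᴴ has injective mulVec
    have hinj : Function.Injective Bᴴ.mulVecLin := by
      rw [← LinearMap.ker_eq_bot]
      have h1 := LinearMap.finrank_range_add_finrank_ker Bᴴ.mulVecLin
      have h2 : Module.finrank ℂ (LinearMap.range Bᴴ.mulVecLin) = m := by
        have : Bᴴ.rank = m := by rw [Matrix.rank_conjTranspose, hr]
        simpa [Matrix.rank] using this
      rw [h2] at h1
      simp only [Module.finrank_pi, Fintype.card_fin] at h1
      have : Module.finrank ℂ (LinearMap.ker Bᴴ.mulVecLin) = 0 := by omega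
      exact Submodule.finrank_eq_zero.mp this
    have hBB : (B * Bᴴ).PosDef := by
      refine Matrix.PosDef.of_dotProduct_mulVec_pos (Matrix.isHermitian_mul_conjTranspose_self _) (fun x hx => ?_)
      have hBx : Bᴴ *ᵥ x ≠ 0 := by
        intro h
        apply hx
        apply hinj
        simpa using h
      have key : star x ᵥ* B = star (Bᴴ *ᵥ x) := by
        rw [Matrix.star_mulVec, Matrix.conjTranspose_conjTranspose]
      have : star x ⬝ᵥ (B * Bᴴ) *ᵥ x = star (Bᴴ *ᵥ x) ⬝ᵥ (Bᴴ *ᵥ x) := by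
        rw [← Matrix.mulVec_mulVec, Matrix.dotProduct_mulVec, key]
      rw [this]
      exact Matrix.dotProduct_star_self_pos_iff.mpr hBx
    have hUnit : IsUnit (B * Bᴴ) := hBB.isUnit
    -- right inverse C of B
    set C : Matrix (Fin n) (Fin m) ℂ := Bᴴ * (B * Bᴴ)⁻¹ with hC
    have hBC : B * C = 1 := by
      rw [hC, ← Matrix.mul_assoc, Matrix.mul_nonsing_inv _ (Matrix.isUnit_iff_isUnit_det _ |>.mp hUnit)]
    refine ⟨C * (A + 1) * Cᴴ, ?_, ?_⟩
    · have hA1 : (A + 1).IsHermitian := hA.isHermitian.add Matrix.isHermitian_one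
      exact Matrix.isHermitian_mul_mul_conjTranspose C hA1
    · have : B * (C * (A + 1) * Cᴴ) * Bᴴ = A + 1 := by
        calc B * (C * (A + 1) * Cᴴ) * Bᴴ
            = (B * C) * (A + 1) * (B * C)ᴴ := by
              simp only [Matrix.conjTranspose_mul, Matrix.mul_assoc]
          _ = A + 1 := by rw [hBC]; simp
      rw [this]
      have h1 : A + 1 - A = (1 : Matrix (Fin m) (Fin m) ℂ) := by
        abel
      rw [h1]
      exact Matrix.PosDef.one
end

section
/- Let A ∈ ℂ^{m×m} be Hermitian, B ∈ ℂ^{m×n}, and suppose the inequality BXB* ⪰ A has a Hermitian solution. Then every Hermitian X with BXB* ⪰ A satisfies BXB* ⪰ A − AE_B(E_B A E_B)†E_B A, i.e., A − AE_B(E_B A E_B)†E_B A is the minimum of {BXB* : X Hermitian, BXB* ⪰ A} in the Löwner order, and it is itself attained. -/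
open Matrix
open scoped ComplexOrder

variable {k : Type*} [Fintype k] [DecidableEq k]

lemma exists_mp_of_hermitian {A : Matrix k k ℂ} (hA : A.IsHermitian) :
    ∃ X : Matrix k k ℂ, IsMoorePenrose A X ∧ X.IsHermitian := by
  classical
  set V : Matrix k k ℂ := (hA.eigenvectorUnitary : Matrix k k ℂ) with hV
  have hVV' : star V * V = 1 := mem_unitaryGroup_iff'.mp hA.eigenvectorUnitary.2
  set d : k → ℂ := RCLike.ofReal ∘ hA.eigenvalues with hd
  set g : k → ℂ := fun i => if d i = 0 then 0 else (d i)⁻¹ with hg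
  have hgi : ∀ i, g i = if d i = 0 then 0 else (d i)⁻¹ := fun i => rfl
  have hdgd : ∀ i, d i * g i * d i = d i := by
    intro i
    rw [hgi i]
    by_cases h : d i = 0
    · simp [h]
    · rw [if_neg h]; field_simp
  have hgdg : ∀ i, g i * d i * g i = g i := by
    intro i
    rw [hgi i]
    by_cases h : d i = 0
    · simp [h]
    · rw [if_neg h]; field_simp
  have hdreal : ∀ i, star (d i) = d i := by
    intro i; simp [hd, Complex.ext_iff]
  have hgreal : ∀ i, star (g i) = g i := by
    intro i
    rw [hgi i]
    by_cases h : d i = 0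
    · simp [h]
    · rw [if_neg h, star_inv₀, hdreal]
  have hdg : ∀ i, d i * g i = g i * d i := fun i => mul_comm _ _
  have hspec : A = V * diagonal d * star V := hA.spectral_theorem
  have key : ∀ d1 d2 : k → ℂ, (V * diagonal d1 * star V) * (V * diagonal d2 * star V)
      = V * diagonal (fun i => d1 i * d2 i) * star V := by
    intro d1 d2
    calc (V * diagonal d1 * star V) * (V * diagonal d2 * star V)
        = V * diagonal d1 * (star V * V) * diagonal d2 * star V := by
          simp only [mul_assoc]
      _ = V * diagonal (fun i => d1 i * d2 i) * star V := by
          rw [hVV']; simp only [mul_one, mul_assoc, diagonal_mul_diagonal]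
  have hct : ∀ e : k → ℂ, (∀ i, star (e i) = e i) →
      (V * diagonal e * star V)ᴴ = V * diagonal e * star V := by
    intro e he
    have : (diagonal e)ᴴ = diagonal e := by
      rw [diagonal_conjTranspose]
      exact congrArg diagonal (funext fun i => he i)
    simp [conjTranspose_mul, this, mul_assoc, star_eq_conjTranspose]
  have hde : ∀ e1 e2 : k → ℂ, (∀ i, e1 i = e2 i) → diagonal e1 = diagonal e2 :=
    fun e1 e2 h => congrArg diagonal (funext h)
  refine ⟨V * diagonal g * star V, ⟨?_, ?_, ?_, ?_⟩, ?_⟩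
  · rw [hspec, key, key, hde _ _ (fun i => by simpa using hdgd i)]
  · rw [hspec, key, key, hde _ _ (fun i => by simpa using hgdg i)]
  · rw [hspec, key]
    exact hct _ (fun i => by rw [star_mul', hdreal, hgreal])
  · rw [hspec, key]
    exact hct _ (fun i => by rw [star_mul', hdreal, hgreal])
  · exact hct g hgreal

lemma exists_mp_s16 {p q : Type*} [Fintype p] [Fintype q] [DecidableEq p]
    (A : Matrix p q ℂ) : ∃ X, IsMoorePenrose A X := by
  obtain ⟨G, ⟨hKGK, hGKG, hKGh, hGKh⟩, hGherm⟩ :=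
    exists_mp_of_hermitian (isHermitian_mul_conjTranspose_self A)
  set K : Matrix p p ℂ := A * Aᴴ with hK
  have hKherm : Kᴴ = K := (isHermitian_mul_conjTranspose_self A)
  have hz : (A - K * G * A) * (A - K * G * A)ᴴ = 0 := by
    have e1 : (A - K * G * A)ᴴ = Aᴴ - Aᴴ * G * K := by
      simp only [conjTranspose_sub, conjTranspose_mul, conjTranspose_conjTranspose, hKherm, hGherm.eq, Matrix.mul_assoc]
    have e4 : (A - K * G * A) * (Aᴴ - Aᴴ * G * K)
        = K - K * G * K - K * G * K + K * G * K * G * K := by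
      rw [hK]
      simp only [Matrix.sub_mul, Matrix.mul_sub, Matrix.mul_assoc]
      abel
    rw [e1, e4]
    simp only [hKGK]
    abel
  have hKGA : K * G * A = A := by
    have := sub_eq_zero.mp (self_mul_conjTranspose_eq_zero.mp hz)
    exact this.symm
  have hAGK : A = K * G * A := hKGA.symm
  refine ⟨Aᴴ * G, ?_, ?_, ?_, ?_⟩
  · calc A * (Aᴴ * G) * A = (A * Aᴴ) * G * A := by simp only [Matrix.mul_assoc]
      _ = A := by rw [← hK, hKGA]
  · calc Aᴴ * G * A * (Aᴴ * G) = Aᴴ * (G * (A * Aᴴ) * G) := by simp only [Matrix.mul_assoc]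
      _ = Aᴴ * G := by rw [← hK, ← Matrix.mul_assoc, ← Matrix.mul_assoc, Matrix.mul_assoc Aᴴ G K, Matrix.mul_assoc Aᴴ (G * K) G, hGKG]
  · calc (A * (Aᴴ * G))ᴴ = (K * G)ᴴ := by rw [hK]; simp only [Matrix.mul_assoc]
      _ = K * G := hKGh
      _ = A * (Aᴴ * G) := by rw [hK]; simp only [Matrix.mul_assoc]
  · calc (Aᴴ * G * A)ᴴ = Aᴴ * Gᴴ * A := by simp only [conjTranspose_mul, conjTranspose_conjTranspose, Matrix.mul_assoc]
      _ = Aᴴ * G * A := by rw [hGherm.eq]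

section MP
variable {p q : Type*} [Fintype p] [Fintype q] [DecidableEq p] [DecidableEq q]

lemma mp_unique {A : Matrix p q ℂ} {X Y : Matrix q p ℂ}
    (hX : IsMoorePenrose A X) (hY : IsMoorePenrose A Y) : X = Y := by
  obtain ⟨hX1, hX2, hX3, hX4⟩ := hX
  obtain ⟨hY1, hY2, hY3, hY4⟩ := hY
  have hAXY : A * X = A * Y := by
    calc A * X = (A * X)ᴴ := hX3.symm
      _ = ((A * Y * A) * X)ᴴ := by rw [hY1]
      _ = ((A * Y) * (A * X))ᴴ := by simp only [Matrix.mul_assoc]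
      _ = (A * X)ᴴ * (A * Y)ᴴ := by rw [conjTranspose_mul]
      _ = (A * X) * (A * Y) := by rw [hX3, hY3]
      _ = (A * X * A) * Y := by simp only [Matrix.mul_assoc]
      _ = A * Y := by rw [hX1]
  have hXYA : X * A = Y * A := by
    calc X * A = (X * A)ᴴ := hX4.symm
      _ = (X * (A * Y * A))ᴴ := by rw [hY1]
      _ = ((X * A) * (Y * A))ᴴ := by simp only [Matrix.mul_assoc]
      _ = (Y * A)ᴴ * (X * A)ᴴ := by rw [conjTranspose_mul]
      _ = (Y * A) * (X * A) := by rw [hX4, hY4]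
      _ = Y * (A * X * A) := by simp only [Matrix.mul_assoc]
      _ = Y * A := by rw [hX1]
  calc X = X * A * X := hX2.symm
    _ = X * (A * Y) := by rw [Matrix.mul_assoc, hAXY]
    _ = (X * A) * Y := by rw [Matrix.mul_assoc]
    _ = (Y * A) * Y := by rw [hXYA]
    _ = Y := hY2

lemma pinv_isMP (A : Matrix p q ℂ) : IsMoorePenrose A (pinv A) := by
  have h : ∃ X, IsMoorePenrose A X := exists_mp_s16 A
  rw [pinv, dif_pos h]
  exact h.choose_spec

lemma pinv_eq {A : Matrix p q ℂ} {X : Matrix q p ℂ} (hX : IsMoorePenrose A X) :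
    pinv A = X := mp_unique (pinv_isMP A) hX

lemma pinv_neg (A : Matrix p q ℂ) : pinv (-A) = -pinv A := by
  obtain ⟨h1, h2, h3, h4⟩ := pinv_isMP A
  refine pinv_eq ⟨?_, ?_, ?_, ?_⟩
  · simp only [Matrix.neg_mul, Matrix.mul_neg, neg_neg, h1]
  · simp only [Matrix.neg_mul, Matrix.mul_neg, neg_neg, h2]
  · simp only [Matrix.neg_mul, Matrix.mul_neg, neg_neg, h3]
  · simp only [Matrix.neg_mul, Matrix.mul_neg, neg_neg, h4]

lemma pinv_conjTranspose_s16 (A : Matrix p q ℂ) : pinv Aᴴ = (pinv A)ᴴ := by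
  obtain ⟨h1, h2, h3, h4⟩ := pinv_isMP A
  refine pinv_eq ⟨?_, ?_, ?_, ?_⟩
  · calc Aᴴ * (pinv A)ᴴ * Aᴴ = (A * (pinv A * A))ᴴ := by
            simp only [conjTranspose_mul, Matrix.mul_assoc]
      _ = Aᴴ := by rw [← Matrix.mul_assoc, h1]
  · calc (pinv A)ᴴ * Aᴴ * (pinv A)ᴴ = (pinv A * (A * pinv A))ᴴ := by
            simp only [conjTranspose_mul, Matrix.mul_assoc]
      _ = (pinv A)ᴴ := by rw [← Matrix.mul_assoc, h2]
  · calc (Aᴴ * (pinv A)ᴴ)ᴴ = pinv A * A := by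
            simp only [conjTranspose_mul, conjTranspose_conjTranspose]
      _ = (pinv A * A)ᴴ := h4.symm
      _ = Aᴴ * (pinv A)ᴴ := by rw [conjTranspose_mul]
  · calc ((pinv A)ᴴ * Aᴴ)ᴴ = A * pinv A := by
            simp only [conjTranspose_mul, conjTranspose_conjTranspose]
      _ = (A * pinv A)ᴴ := h3.symm
      _ = (pinv A)ᴴ * Aᴴ := by rw [conjTranspose_mul]

lemma pinv_isHermitian {A : Matrix p p ℂ} (hA : A.IsHermitian) :
    (pinv A).IsHermitian := by
  have := pinv_conjTranspose_s16 A
  rw [hA.eq] at this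
  exact (this.symm : (pinv A)ᴴ = pinv A)

end MP

section Key
variable {a b : Type*} [Fintype a] [Fintype b] [DecidableEq a] [DecidableEq b]

lemma pinv_conjTranspose_mul_self (N : Matrix a b ℂ) :
    pinv (Nᴴ * N) = pinv N * (pinv N)ᴴ := by
  obtain ⟨h1, h2, h3, h4⟩ := pinv_isMP N
  set P := pinv N with hP
  have h1' : N * (P * N) = N := by rw [← Matrix.mul_assoc, h1]
  have base_PN : Pᴴ * Nᴴ = N * P := by rw [← conjTranspose_mul, h3]
  have base_NP : Nᴴ * Pᴴ = P * N := by rw [← conjTranspose_mul, h4]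
  have rPN : ∀ (Z : Matrix a b ℂ), Pᴴ * (Nᴴ * Z) = N * (P * Z) := by
    intro Z
    rw [← Matrix.mul_assoc, base_PN, Matrix.mul_assoc]
  have rNP : ∀ (Z : Matrix b b ℂ), N * (P * (N * Z)) = N * Z := by
    intro Z
    rw [← Matrix.mul_assoc, ← Matrix.mul_assoc, h1]
  have rP : ∀ (Z : Matrix a b ℂ), P * (N * (P * Z)) = P * Z := by
    intro Z
    rw [← Matrix.mul_assoc, ← Matrix.mul_assoc, h2]
  have base_NN : Nᴴ * (N * P) = Nᴴ := by
    calc Nᴴ * (N * P) = Nᴴ * (N * P)ᴴ := by rw [h3]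
      _ = (N * P * N)ᴴ := (conjTranspose_mul (N * P) N).symm
      _ = Nᴴ := by rw [h1]
  have rNN : ∀ (Z : Matrix a b ℂ), Nᴴ * (N * (P * Z)) = Nᴴ * Z := by
    intro Z
    calc Nᴴ * (N * (P * Z)) = (Nᴴ * (N * P)) * Z := by simp only [Matrix.mul_assoc]
      _ = Nᴴ * Z := by rw [base_NN]
  have hAX : (Nᴴ * N) * (P * Pᴴ) = P * N := by
    calc (Nᴴ * N) * (P * Pᴴ) = Nᴴ * (N * (P * Pᴴ)) := by simp only [Matrix.mul_assoc]
      _ = Nᴴ * Pᴴ := by rw [rNN Pᴴ]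
      _ = P * N := base_NP
  have hXA : (P * Pᴴ) * (Nᴴ * N) = P * N := by
    calc (P * Pᴴ) * (Nᴴ * N) = P * (Pᴴ * (Nᴴ * N)) := by simp only [Matrix.mul_assoc]
      _ = P * (N * (P * N)) := by rw [rPN N]
      _ = P * N := by rw [h1']
  refine pinv_eq ⟨?_, ?_, ?_, ?_⟩
  · calc (Nᴴ * N) * (P * Pᴴ) * (Nᴴ * N) = (P * N) * (Nᴴ * N) := by rw [hAX]
      _ = Nᴴ * (Pᴴ * (Nᴴ * N)) := by rw [← base_NP]; simp only [Matrix.mul_assoc]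
      _ = Nᴴ * (N * (P * N)) := by rw [rPN N]
      _ = Nᴴ * N := by rw [h1']
  · calc (P * Pᴴ) * (Nᴴ * N) * (P * Pᴴ) = (P * N) * (P * Pᴴ) := by rw [hXA]
      _ = P * (N * (P * Pᴴ)) := by simp only [Matrix.mul_assoc]
      _ = P * Pᴴ := by rw [rP Pᴴ]
  · rw [hAX]; exact h4
  · rw [hXA]; exact h4

lemma key_aux {k : Type*} [Fintype k] [DecidableEq k] {D E : Matrix k k ℂ}
    (hD : D.PosSemidef) (hE : E.IsHermitian) :
    (E * D * E) * pinv (E * D * E) * (E * D) = E * D ∧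
    (D * E * pinv (E * D * E) * (E * D)).PosSemidef ∧
    (D - D * E * pinv (E * D * E) * (E * D)).PosSemidef := by
  set C : Matrix k k ℂ := (open scoped MatrixOrder in CFC.sqrt D) with hC
  have hCC : C * C = D := by open scoped MatrixOrder in exact CFC.sqrt_mul_sqrt_self D hD.nonneg
  have hCh : Cᴴ = C := by open scoped MatrixOrder in exact (CFC.sqrt_nonneg D).posSemidef.1
  set N := C * E with hN
  have hNh : Nᴴ = E * C := by rw [hN, conjTranspose_mul, hCh, hE.eq]
  have hEDE : E * D * E = Nᴴ * N := by
    rw [hNh, hN, ← hCC]; simp only [Matrix.mul_assoc]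
  have hED : E * D = Nᴴ * C := by rw [hNh, ← hCC, ← Matrix.mul_assoc]
  have hDE : D * E = C * N := by rw [hN, ← hCC, Matrix.mul_assoc]
  have hpinv : pinv (E * D * E) = pinv N * (pinv N)ᴴ := by
    rw [hEDE, pinv_conjTranspose_mul_self]
  set P := pinv N with hP
  obtain ⟨h1, h2, h3, h4⟩ := pinv_isMP N
  rw [← hP] at h1 h2 h3 h4
  have h1' : N * (P * N) = N := by rw [← Matrix.mul_assoc, h1]
  have base_PN : Pᴴ * Nᴴ = N * P := by rw [← conjTranspose_mul, h3]
  have rPN : ∀ (Z : Matrix k k ℂ), Pᴴ * (Nᴴ * Z) = N * (P * Z) := by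
    intro Z
    rw [← Matrix.mul_assoc, base_PN, Matrix.mul_assoc]
  have rNP : ∀ (Z : Matrix k k ℂ), N * (P * (N * Z)) = N * Z := by
    intro Z
    rw [← Matrix.mul_assoc, ← Matrix.mul_assoc, h1]
  have base_NN : Nᴴ * (N * P) = Nᴴ := by
    calc Nᴴ * (N * P) = Nᴴ * (N * P)ᴴ := by rw [h3]
      _ = (N * P * N)ᴴ := (conjTranspose_mul (N * P) N).symm
      _ = Nᴴ := by rw [h1]
  have rNN : ∀ (Z : Matrix k k ℂ), Nᴴ * (N * (P * Z)) = Nᴴ * Z := by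
    intro Z
    calc Nᴴ * (N * (P * Z)) = (Nᴴ * (N * P)) * Z := by simp only [Matrix.mul_assoc]
      _ = Nᴴ * Z := by rw [base_NN]
  refine ⟨?_, ?_, ?_⟩
  · rw [hpinv, hEDE, hED]
    calc Nᴴ * N * (P * Pᴴ) * (Nᴴ * C) = Nᴴ * (N * (P * (Pᴴ * (Nᴴ * C)))) := by
          simp only [Matrix.mul_assoc]
      _ = Nᴴ * (N * (P * (N * (P * C)))) := by rw [rPN C]
      _ = Nᴴ * (N * (P * C)) := by rw [rNP (P * C)]
      _ = Nᴴ * C := by rw [rNN C]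
  · have hb : D * E * pinv (E * D * E) * (E * D) = (C * (N * P)) * (C * (N * P))ᴴ := by
      rw [hpinv, hDE, hED]
      calc C * N * (P * Pᴴ) * (Nᴴ * C) = C * (N * (P * (Pᴴ * (Nᴴ * C)))) := by
            simp only [Matrix.mul_assoc]
        _ = (C * (N * P)) * (C * (N * P))ᴴ := by
            simp only [conjTranspose_mul, hCh, Matrix.mul_assoc]
    rw [hb]
    exact posSemidef_self_mul_conjTranspose _
  · have hc : D - D * E * pinv (E * D * E) * (E * D)
        = (C * (1 - N * P)) * (C * (1 - N * P))ᴴ := by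
      rw [hpinv, hDE, hED]
      have expand : (C * (1 - N * P)) * (C * (1 - N * P))ᴴ
          = C * C - C * (N * (P * C)) - C * (N * (P * C)) + C * (N * (P * (N * (P * C)))) := by
        have hone : (1 - N * P)ᴴ = 1 - Pᴴ * Nᴴ := by
          simp only [conjTranspose_sub, conjTranspose_one, conjTranspose_mul]
        rw [conjTranspose_mul, hone, hCh]
        calc C * (1 - N * P) * ((1 - Pᴴ * Nᴴ) * C)
            = C * (1 - N * P) * (C - Pᴴ * (Nᴴ * C)) := by
              simp only [Matrix.sub_mul, Matrix.one_mul, Matrix.mul_assoc]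
          _ = C * (1 - N * P) * (C - N * (P * C)) := by rw [rPN C]
          _ = (C - C * (N * P)) * (C - N * (P * C)) := by
              simp only [Matrix.mul_sub, Matrix.mul_one]
          _ = C * C - C * (N * (P * C)) - C * (N * (P * C)) + C * (N * (P * (N * (P * C)))) := by
              simp only [Matrix.sub_mul, Matrix.mul_sub, Matrix.mul_assoc]
              abel
      rw [expand, rNP (P * C)]
      have : C * N * (P * Pᴴ) * (Nᴴ * C) = C * (N * (P * C)) := by
        calc C * N * (P * Pᴴ) * (Nᴴ * C) = C * (N * (P * (Pᴴ * (Nᴴ * C)))) := by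
              simp only [Matrix.mul_assoc]
          _ = C * (N * (P * (N * (P * C)))) := by rw [rPN C]
          _ = C * (N * (P * C)) := by rw [rNP (P * C)]
      rw [this, hCC]
      abel
    rw [hc]
    exact posSemidef_self_mul_conjTranspose _

theorem lmi_min_matrix {m n : ℕ} (A : Matrix (Fin m) (Fin m) ℂ)
    (B : Matrix (Fin m) (Fin n) ℂ) (hA : A.IsHermitian)
    (hcons : ∃ X : Matrix (Fin n) (Fin n) ℂ, X.IsHermitian ∧ (B * X * Bᴴ - A).PosSemidef) :
    (∃ X : Matrix (Fin n) (Fin n) ℂ, X.IsHermitian ∧ (B * X * Bᴴ - A).PosSemidef ∧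
      B * X * Bᴴ = A - A * (1 - B * pinv B) *
        pinv ((1 - B * pinv B) * A * (1 - B * pinv B)) * ((1 - B * pinv B) * A)) ∧
    (∀ X : Matrix (Fin n) (Fin n) ℂ, X.IsHermitian → (B * X * Bᴴ - A).PosSemidef →
      (B * X * Bᴴ - (A - A * (1 - B * pinv B) *
        pinv ((1 - B * pinv B) * A * (1 - B * pinv B)) * ((1 - B * pinv B) * A))).PosSemidef) := by
  obtain ⟨b1, b2, b3, b4⟩ := pinv_isMP B
  set E : Matrix (Fin m) (Fin m) ℂ := 1 - B * pinv B with hEdef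
  have hEherm : E.IsHermitian := by
    show Eᴴ = E
    rw [hEdef, conjTranspose_sub, conjTranspose_one, b3]
  have hEB : E * B = 0 := by
    rw [hEdef, Matrix.sub_mul, Matrix.one_mul, b1, sub_self]
  have hBE : Bᴴ * E = 0 := by
    have : (E * B)ᴴ = Bᴴ * Eᴴ := conjTranspose_mul E B
    rw [hEB, conjTranspose_zero, hEherm.eq] at this
    exact this.symm
  -- identities valid for any solution X
  have hXfacts : ∀ X : Matrix (Fin n) (Fin n) ℂ,
      E * (B * X * Bᴴ - A) = -(E * A) ∧ (B * X * Bᴴ - A) * E = -(A * E) ∧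
      E * A * E = -(E * (B * X * Bᴴ - A) * E) := by
    intro X
    have e1 : E * (B * X * Bᴴ) = 0 := by
      calc E * (B * X * Bᴴ) = (E * B) * X * Bᴴ := by simp only [Matrix.mul_assoc]
        _ = 0 := by rw [hEB, Matrix.zero_mul, Matrix.zero_mul]
    have e2 : (B * X * Bᴴ) * E = 0 := by
      calc (B * X * Bᴴ) * E = B * X * (Bᴴ * E) := by simp only [Matrix.mul_assoc]
        _ = 0 := by rw [hBE, Matrix.mul_zero]
    have f1 : E * (B * X * Bᴴ - A) = -(E * A) := by
      rw [Matrix.mul_sub, e1, zero_sub]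
    have f2 : (B * X * Bᴴ - A) * E = -(A * E) := by
      rw [Matrix.sub_mul, e2, zero_sub]
    refine ⟨f1, f2, ?_⟩
    rw [f1, Matrix.neg_mul, neg_neg]
  -- the translation between the statement's expression and key_aux's expression
  have hMform : ∀ X : Matrix (Fin n) (Fin n) ℂ,
      A * E * pinv (E * A * E) * (E * A)
        = -((B * X * Bᴴ - A) * E * pinv (E * (B * X * Bᴴ - A) * E)
            * (E * (B * X * Bᴴ - A))) := by
    intro X
    obtain ⟨f1, f2, f3⟩ := hXfacts X
    have hAE : A * E = -((B * X * Bᴴ - A) * E) := by rw [f2, neg_neg]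
    have hEA : E * A = -(E * (B * X * Bᴴ - A)) := by rw [f1, neg_neg]
    have hpS : pinv (E * A * E) = -(pinv (E * (B * X * Bᴴ - A) * E)) := by
      rw [f3, pinv_neg]
    rw [hpS, hAE, hEA]
    simp only [Matrix.neg_mul, Matrix.mul_neg, neg_neg]
  obtain ⟨X₁, hX₁, hD⟩ := hcons
  obtain ⟨k1, k2, k3⟩ := key_aux hD hEherm
  have hM : A - A * E * pinv (E * A * E) * (E * A)
      = A + (B * X₁ * Bᴴ - A) * E * pinv (E * (B * X₁ * Bᴴ - A) * E)
          * (E * (B * X₁ * Bᴴ - A)) := by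
    rw [hMform X₁]
    abel
  constructor
  · -- existence
    set D := B * X₁ * Bᴴ - A with hDdef
    set T := D * E * pinv (E * D * E) * (E * D) with hTdef
    have hTherm : T.IsHermitian := k2.1
    have hMherm : (A + T).IsHermitian := hA.add hTherm
    have hEM : E * (A + T) = 0 := by
      have h5 : E * T = E * D := by
        calc E * T = (E * D * E) * pinv (E * D * E) * (E * D) := by
              rw [hTdef]; simp only [Matrix.mul_assoc]
          _ = E * D := k1
      rw [Matrix.mul_add, h5, (hXfacts X₁).1, add_neg_cancel]
    have hBBM : (B * pinv B) * (A + T) = A + T := by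
      have : B * pinv B = 1 - E := by rw [hEdef]; abel
      rw [this, Matrix.sub_mul, Matrix.one_mul, hEM, sub_zero]
    have hMBB : (A + T) * (B * pinv B) = A + T := by
      have : ((B * pinv B) * (A + T))ᴴ = (A + T)ᴴ := by rw [hBBM]
      rw [conjTranspose_mul, hMherm.eq, b3] at this
      exact this
    refine ⟨pinv B * (A + T) * (pinv B)ᴴ, ?_, ?_, ?_⟩
    · show (pinv B * (A + T) * (pinv B)ᴴ)ᴴ = pinv B * (A + T) * (pinv B)ᴴ
      calc (pinv B * (A + T) * (pinv B)ᴴ)ᴴ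
          = pinv B * ((A + T)ᴴ * (pinv B)ᴴ) := by
            simp only [conjTranspose_mul, conjTranspose_conjTranspose, Matrix.mul_assoc]
        _ = pinv B * (A + T) * (pinv B)ᴴ := by rw [hMherm.eq, Matrix.mul_assoc]
    · have hform : B * (pinv B * (A + T) * (pinv B)ᴴ) * Bᴴ = A + T := by
        calc B * (pinv B * (A + T) * (pinv B)ᴴ) * Bᴴ
            = (B * pinv B) * (A + T) * ((pinv B)ᴴ * Bᴴ) := by simp only [Matrix.mul_assoc]
          _ = (B * pinv B) * (A + T) * (B * pinv B) := by rw [← conjTranspose_mul, b3]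
          _ = A + T := by rw [hBBM, hMBB]
      rw [hform]
      have : A + T - A = T := by abel
      rw [this]
      exact k2
    · have hform : B * (pinv B * (A + T) * (pinv B)ᴴ) * Bᴴ = A + T := by
        calc B * (pinv B * (A + T) * (pinv B)ᴴ) * Bᴴ
            = (B * pinv B) * (A + T) * ((pinv B)ᴴ * Bᴴ) := by simp only [Matrix.mul_assoc]
          _ = (B * pinv B) * (A + T) * (B * pinv B) := by rw [← conjTranspose_mul, b3]
          _ = A + T := by rw [hBBM, hMBB]
      rw [hform, hM]
  · -- minimality
    intro X hX hDX
    obtain ⟨j1, j2, j3⟩ := key_aux hDX hEherm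
    have : B * X * Bᴴ - (A - A * E * pinv (E * A * E) * (E * A))
        = (B * X * Bᴴ - A) - (B * X * Bᴴ - A) * E * pinv (E * (B * X * Bᴴ - A) * E)
            * (E * (B * X * Bᴴ - A)) := by
      rw [hMform X]
      abel
    rw [this]
    exact j3
end Key
end

section
/- Let A ∈ ℂ^{m×m} be Hermitian, B ∈ ℂ^{m×n}, and suppose BXB* ⪰ A has a Hermitian solution. Then the minimum over all such Hermitian solutions X of the rank of BXB* − A equals rank([A, B]) − rank(B), and the maximum of the rank of BXB* − A equals rank([A, B]). -/
set_option linter.unusedSectionVars false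
set_option linter.unusedVariables false
set_option maxHeartbeats 800000

open Matrix
open scoped ComplexOrder

open Submodule Module LinearMap

namespace LMI

variable {a b c : Type*} [Fintype a] [Fintype b] [Fintype c]
  [DecidableEq a] [DecidableEq b] [DecidableEq c]

noncomputable def L (M : Matrix a b ℂ) :
    EuclideanSpace ℂ b →ₗ[ℂ] EuclideanSpace ℂ a := Matrix.toEuclideanLin M

lemma L_inj {M N : Matrix a b ℂ} (h : L M = L N) : M = N :=
  Matrix.toEuclideanLin.injective h

lemma rank_eq_L (M : Matrix a b ℂ) :
    M.rank = finrank ℂ (LinearMap.range (L M)) :=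
  Matrix.rank_eq_finrank_range_toLin M (PiLp.basisFun 2 ℂ a) (PiLp.basisFun 2 ℂ b)

lemma L_mul (M : Matrix a b ℂ) (N : Matrix b c ℂ) : L (M * N) = L M ∘ₗ L N :=
  Matrix.toLin_mul (PiLp.basisFun 2 ℂ c) (PiLp.basisFun 2 ℂ b) (PiLp.basisFun 2 ℂ a) M N

lemma L_conjT (M : Matrix a b ℂ) : L Mᴴ = LinearMap.adjoint (L M) :=
  Matrix.toEuclideanLin_conjTranspose_eq_adjoint M

/-- The matrix of the orthogonal projection onto a subspace. -/
noncomputable def pm (U : Submodule ℂ (EuclideanSpace ℂ a)) : Matrix a a ℂ :=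
  Matrix.toEuclideanLin.symm (U.subtypeL ∘L orthogonalProjection U : _ →L[ℂ] _)

lemma L_pm (U : Submodule ℂ (EuclideanSpace ℂ a)) :
    L (pm U) = ((U.subtypeL ∘L orthogonalProjection U : _ →L[ℂ] _) :
      EuclideanSpace ℂ a →ₗ[ℂ] EuclideanSpace ℂ a) := by
  simp [L, pm]

lemma pm_apply (U : Submodule ℂ (EuclideanSpace ℂ a)) (x : EuclideanSpace ℂ a) :
    L (pm U) x = (orthogonalProjection U x : EuclideanSpace ℂ a) := by
  rw [L_pm]; rfl

lemma pm_conjT (U : Submodule ℂ (EuclideanSpace ℂ a)) : (pm U)ᴴ = pm U := by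
  apply L_inj
  rw [L_conjT, L_pm]
  have h := (LinearMap.isSymmetric_iff_isSelfAdjoint _).1 (Submodule.starProjection_isSymmetric (K := U))
  exact h

lemma pm_herm (U : Submodule ℂ (EuclideanSpace ℂ a)) : (pm U).IsHermitian := pm_conjT U

lemma pm_mul_pm (U : Submodule ℂ (EuclideanSpace ℂ a)) : pm U * pm U = pm U := by
  apply L_inj
  rw [L_mul]
  refine LinearMap.ext fun x => ?_
  rw [LinearMap.comp_apply, pm_apply, pm_apply]
  exact (Submodule.starProjection_eq_self_iff (K := U)).2 (orthogonalProjection U x).2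

lemma range_L_pm (U : Submodule ℂ (EuclideanSpace ℂ a)) : LinearMap.range (L (pm U)) = U := by
  apply le_antisymm
  · rintro y ⟨x, rfl⟩
    rw [pm_apply]; exact (orthogonalProjection U x).2
  · intro y hy
    exact ⟨y, by rw [pm_apply]; exact (Submodule.starProjection_eq_self_iff (K := U)).2 hy⟩

lemma ker_L_pm (U : Submodule ℂ (EuclideanSpace ℂ a)) : LinearMap.ker (L (pm U)) = Uᗮ := by
  ext x
  rw [LinearMap.mem_ker, pm_apply, ← Submodule.orthogonalProjectionOnto_eq_zero_iff (K := U)]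
  exact ⟨fun h => Subtype.ext h, fun h => congrArg _ h⟩

lemma pm_mul_self_of_range_le {M : Matrix a a ℂ} {U : Submodule ℂ (EuclideanSpace ℂ a)}
    (h : LinearMap.range (L M) ≤ U) : pm U * M = M := by
  apply L_inj
  rw [L_mul]
  refine LinearMap.ext fun x => ?_
  rw [LinearMap.comp_apply, pm_apply]
  exact (Submodule.starProjection_eq_self_iff (K := U)).2 (h ⟨x, rfl⟩)

lemma herm_L_adj {H : Matrix a a ℂ} (hH : H.IsHermitian) :
    LinearMap.adjoint (L H) = L H := by
  rw [← L_conjT, hH]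

lemma range_L_herm {H : Matrix a a ℂ} (hH : H.IsHermitian) :
    LinearMap.range (L H) = (LinearMap.ker (L H))ᗮ := by
  have hle : LinearMap.range (L H) ≤ (LinearMap.ker (L H))ᗮ := by
    rintro y ⟨x, rfl⟩
    rw [Submodule.mem_orthogonal]
    intro z hz
    rw [LinearMap.mem_ker] at hz
    rw [← LinearMap.adjoint_inner_left, herm_L_adj hH, hz, inner_zero_left]
  refine Submodule.eq_of_le_of_finrank_le hle ?_
  have h1 := LinearMap.finrank_range_add_finrank_ker (L H)
  have h2 := Submodule.finrank_add_finrank_orthogonal (K := LinearMap.ker (L H))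
  omega

lemma range_le_of_ker_le {H K : Matrix a a ℂ} (hH : H.IsHermitian) (hK : K.IsHermitian)
    (h : LinearMap.ker (L H) ≤ LinearMap.ker (L K)) :
    LinearMap.range (L K) ≤ LinearMap.range (L H) := by
  rw [range_L_herm hH, range_L_herm hK]
  exact Submodule.orthogonal_le h

lemma L_add (M N : Matrix a b ℂ) : L (M + N) = L M + L N := map_add _ _ _

lemma L_sub (M N : Matrix a b ℂ) : L (M - N) = L M - L N := map_sub _ _ _

lemma L_apply (M : Matrix a b ℂ) (x : EuclideanSpace ℂ b) :
    (WithLp.equiv 2 (a → ℂ)) (L M x) = M *ᵥ (WithLp.equiv 2 (b → ℂ)) x := rfl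

lemma L_eq_zero_iff (M : Matrix a b ℂ) (x : EuclideanSpace ℂ b) :
    L M x = 0 ↔ M *ᵥ (WithLp.equiv 2 (b → ℂ)) x = 0 := by
  constructor
  · intro h
    have := congrArg (WithLp.equiv 2 (a → ℂ)) h
    rwa [L_apply] at this
  · intro h
    apply (WithLp.equiv 2 (a → ℂ)).injective
    exact (L_apply M x).trans (h.trans rfl)

lemma ker_L_psd_add {P Q : Matrix a a ℂ} (hP : P.PosSemidef) (hQ : Q.PosSemidef) :
    LinearMap.ker (L (P + Q)) = LinearMap.ker (L P) ⊓ LinearMap.ker (L Q) := by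
  ext x
  simp only [LinearMap.mem_ker, Submodule.mem_inf, L_eq_zero_iff]
  set v := (WithLp.equiv 2 (a → ℂ)) x
  constructor
  · intro h
    have hdot : star v ⬝ᵥ P *ᵥ v + star v ⬝ᵥ Q *ᵥ v = 0 := by
      rw [← dotProduct_add, ← Matrix.add_mulVec, h, dotProduct_zero]
    have h0 := (add_eq_zero_iff_of_nonneg (hP.dotProduct_mulVec_nonneg v) (hQ.dotProduct_mulVec_nonneg v)).1 hdot
    exact ⟨(hP.dotProduct_mulVec_zero_iff v).1 h0.1, (hQ.dotProduct_mulVec_zero_iff v).1 h0.2⟩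
  · rintro ⟨h1, h2⟩
    rw [Matrix.add_mulVec, h1, h2, add_zero]

lemma psd_range_add {P Q : Matrix a a ℂ} (hP : P.PosSemidef) (hQ : Q.PosSemidef) :
    LinearMap.range (L (P + Q)) = LinearMap.range (L P) ⊔ LinearMap.range (L Q) := by
  refine le_antisymm ?_ (sup_le ?_ ?_)
  · rintro y ⟨x, rfl⟩
    rw [L_add]
    exact Submodule.add_mem_sup ⟨x, rfl⟩ ⟨x, rfl⟩
  · exact range_le_of_ker_le (hP.add hQ).1 hP.1
      (by rw [ker_L_psd_add hP hQ]; exact inf_le_left)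
  · exact range_le_of_ker_le (hP.add hQ).1 hQ.1
      (by rw [ker_L_psd_add hP hQ]; exact inf_le_right)

lemma range_L_mul (M : Matrix a b ℂ) (N : Matrix b c ℂ) :
    LinearMap.range (L (M * N)) = Submodule.map (L M) (LinearMap.range (L N)) := by
  rw [L_mul, LinearMap.range_comp]

lemma mem_range_L {M : Matrix a b ℂ} {y : EuclideanSpace ℂ a} :
    y ∈ LinearMap.range (L M) ↔ ∃ v : b → ℂ, (WithLp.equiv 2 (a → ℂ)).symm (M *ᵥ v) = y := by
  constructor
  · rintro ⟨x, rfl⟩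
    exact ⟨(WithLp.equiv 2 (b → ℂ)) x, by
      apply (WithLp.equiv 2 (a → ℂ)).injective
      simp [L_apply]
      rfl⟩
  · rintro ⟨v, rfl⟩
    exact ⟨(WithLp.equiv 2 (b → ℂ)).symm v, by
      apply (WithLp.equiv 2 (a → ℂ)).injective
      simp [L_apply]
      rfl⟩

lemma range_L_fromColumns (M : Matrix a b ℂ) (N : Matrix a c ℂ) :
    LinearMap.range (L (fromCols M N)) =
      LinearMap.range (L M) ⊔ LinearMap.range (L N) := by
  refine le_antisymm ?_ (sup_le ?_ ?_)
  · rintro y hy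
    rw [mem_range_L] at hy
    obtain ⟨v, rfl⟩ := hy
    have h : fromCols M N *ᵥ v = M *ᵥ (v ∘ Sum.inl) + N *ᵥ (v ∘ Sum.inr) := by
      conv_lhs => rw [← Sum.elim_comp_inl_inr v]
      rw [Matrix.fromCols_mulVec_sumElim]
    rw [h, WithLp.equiv_symm_apply, WithLp.toLp_add]
    exact Submodule.add_mem_sup (mem_range_L.2 ⟨_, rfl⟩) (mem_range_L.2 ⟨_, rfl⟩)
  · rintro y hy
    rw [mem_range_L] at hy
    obtain ⟨v, rfl⟩ := hy
    refine mem_range_L.2 ⟨Sum.elim v 0, ?_⟩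
    rw [Matrix.fromCols_mulVec_sumElim, Matrix.mulVec_zero, add_zero]
  · rintro y hy
    rw [mem_range_L] at hy
    obtain ⟨v, rfl⟩ := hy
    refine mem_range_L.2 ⟨Sum.elim 0 v, ?_⟩
    rw [Matrix.fromCols_mulVec_sumElim, Matrix.mulVec_zero, zero_add]

/-- Any matrix whose columns lie in the range of `L B` factors through `B`. -/
lemma exists_factor {B : Matrix a b ℂ} {M : Matrix a c ℂ}
    (h : LinearMap.range (L M) ≤ LinearMap.range (L B)) :
    ∃ G : Matrix b c ℂ, B * G = M := by
  have hcol : ∀ j : c, ∃ g : b → ℂ, B *ᵥ g = fun i => M i j := by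
    intro j
    have : (WithLp.equiv 2 (a → ℂ)).symm (M *ᵥ Pi.single j 1) ∈ LinearMap.range (L M) :=
      mem_range_L.2 ⟨_, rfl⟩
    obtain ⟨g, hg⟩ := mem_range_L.1 (h this)
    refine ⟨g, ?_⟩
    have := congrArg (WithLp.equiv 2 (a → ℂ)) hg
    simp only [Equiv.apply_symm_apply] at this
    rw [this]
    ext i
    simp [Matrix.mulVec_single]
  choose g hg using hcol
  refine ⟨Matrix.of fun i j => g j i, ?_⟩
  ext i j
  have := congrFun (hg j) i
  simpa [Matrix.mul_apply, Matrix.mulVec, dotProduct] using this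

/-- A Hermitian matrix whose range is contained in the range of `B` can be written `B * X * Bᴴ`
with `X` Hermitian. -/
lemma exists_hermitian_X {B : Matrix a b ℂ} {C : Matrix a a ℂ} (hC : C.IsHermitian)
    (h : LinearMap.range (L C) ≤ LinearMap.range (L B)) :
    ∃ X : Matrix b b ℂ, X.IsHermitian ∧ B * X * Bᴴ = C := by
  set U := LinearMap.range (L B)
  have hF : LinearMap.range (L (pm U)) ≤ U := by rw [range_L_pm]
  obtain ⟨G, hG⟩ := exists_factor (B := B) hF
  have hFC : pm U * C = C := pm_mul_self_of_range_le h
  have hCF : C * pm U = C := by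
    have := congrArg conjTranspose hFC
    rwa [Matrix.conjTranspose_mul, pm_conjT, hC] at this
  refine ⟨G * C * Gᴴ, by simp [Matrix.IsHermitian, Matrix.conjTranspose_mul, hC.eq,
    Matrix.mul_assoc], ?_⟩
  have : B * (G * C * Gᴴ) * Bᴴ = (B * G) * C * (B * G)ᴴ := by
    rw [Matrix.conjTranspose_mul]; simp only [Matrix.mul_assoc]
  rw [this, hG, hFC]
  conv_rhs => rw [← hCF]
  rw [pm_conjT]

lemma rank_neg (M : Matrix a b ℂ) : (-M).rank = M.rank := by
  rw [rank_eq_L, rank_eq_L, show L (-M) = -(L M) from map_neg _ _, LinearMap.range_neg]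

lemma rank_fromColumns_le (M : Matrix a b ℂ) (N : Matrix a c ℂ) :
    (fromCols M N).rank ≤ M.rank + N.rank := by
  rw [rank_eq_L, rank_eq_L, rank_eq_L, range_L_fromColumns]
  have h := Submodule.finrank_sup_add_finrank_inf_eq
    (LinearMap.range (L M)) (LinearMap.range (L N))
  omega

section Proj

variable (B : Matrix a b ℂ)

/-- The projection onto the orthogonal complement of the column space of `B`. -/
noncomputable def em : Matrix a a ℂ := pm (LinearMap.range (L B))ᗮ

lemma em_mul_B : em B * B = 0 := by
  apply L_inj
  rw [L_mul, show L (0 : Matrix a b ℂ) = 0 from map_zero _]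
  refine LinearMap.ext fun x => ?_
  rw [LinearMap.comp_apply, em, pm_apply, LinearMap.zero_apply]
  have : L B x ∈ ((LinearMap.range (L B))ᗮ)ᗮ :=
    Submodule.le_orthogonal_orthogonal _ ⟨x, rfl⟩
  exact congrArg _ (Submodule.orthogonalProjectionOnto_eq_zero_iff.2 this)

lemma range_le_of_em_mul_eq_zero {M : Matrix a c ℂ} (h : em B * M = 0) :
    LinearMap.range (L M) ≤ LinearMap.range (L B) := by
  rintro y ⟨x, rfl⟩
  have h0 : L (em B) (L M x) = 0 := by
    rw [← LinearMap.comp_apply, ← L_mul, h]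
    exact congrFun (congrArg _ (map_zero Matrix.toEuclideanLin)) x
  have : L M x ∈ LinearMap.ker (L (em B)) := h0
  rw [em, ker_L_pm, Submodule.orthogonal_orthogonal] at this
  exact this

lemma em_herm : (em B).IsHermitian := pm_herm _

/-- Key additive rank identity : `rank [A B] = rank B + rank (E * A)`. -/
lemma rank_fromColumns_eq (A : Matrix a a ℂ) :
    (fromCols A B).rank = B.rank + (em B * A).rank := by
  set U := LinearMap.range (L B) with hU
  have hEA_le : LinearMap.range (L (em B * A)) ≤ Uᗮ := by
    rw [range_L_mul]
    refine le_trans (Submodule.map_mono le_top) ?_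
    rw [Submodule.map_top, em, range_L_pm]
  have hsup : LinearMap.range (L A) ⊔ U = LinearMap.range (L (em B * A)) ⊔ U := by
    apply le_antisymm
    · refine sup_le ?_ le_sup_right
      rintro y ⟨x, rfl⟩
      have hdecomp : L A x = L (em B * A) x + (orthogonalProjection U (L A x) : _) := by
        rw [L_mul, LinearMap.comp_apply, em, pm_apply]
        rw [add_comm]
        exact (Submodule.starProjection_add_starProjection_orthogonal (K := U) (L A x)).symm
      rw [hdecomp]
      exact Submodule.add_mem_sup ⟨x, rfl⟩ (orthogonalProjection U (L A x)).2
    · refine sup_le ?_ le_sup_right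
      rintro y ⟨x, rfl⟩
      have hdecomp : L (em B * A) x = L A x - (orthogonalProjection U (L A x) : _) := by
        rw [L_mul, LinearMap.comp_apply, em, pm_apply]
        rw [eq_comm, sub_eq_iff_eq_add, add_comm]
        exact (Submodule.starProjection_add_starProjection_orthogonal (K := U) (L A x)).symm
      rw [hdecomp]
      exact Submodule.sub_mem _ (le_sup_left (a := LinearMap.range (L A)) ⟨x, rfl⟩)
        (le_sup_right (b := U) (orthogonalProjection U (L A x)).2)
  rw [rank_eq_L, rank_eq_L, rank_eq_L, range_L_fromColumns, ← hU, hsup]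
  have hinf : LinearMap.range (L (em B * A)) ⊓ U = ⊥ := by
    rw [eq_bot_iff]
    refine le_trans (inf_le_inf_right _ hEA_le) ?_
    rw [inf_comm]
    exact (Submodule.orthogonal_disjoint U).le_bot
  have := Submodule.finrank_sup_add_finrank_inf_eq
    (LinearMap.range (L (em B * A))) U
  rw [hinf, finrank_bot] at this
  omega

end Proj

section Main

variable {B : Matrix a b ℂ} {A : Matrix a a ℂ}

open scoped MatrixOrder in
lemma min_attained (hA : A.IsHermitian) {X0 : Matrix b b ℂ} (hX0 : X0.IsHermitian)
    (hD0 : (B * X0 * Bᴴ - A).PosSemidef) :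
    ∃ X : Matrix b b ℂ, X.IsHermitian ∧ (B * X * Bᴴ - A).PosSemidef ∧
      (B * X * Bᴴ - A).rank = (em B * A).rank := by
  set D0 := B * X0 * Bᴴ - A with hD0def
  set C := CFC.sqrt D0 with hCdef
  have hCherm : C.IsHermitian := (CFC.sqrt_nonneg D0).posSemidef.1
  have hCC : C * C = D0 := CFC.sqrt_mul_sqrt_self D0 hD0.nonneg
  set E := em B with hEdef
  have hEherm : E.IsHermitian := em_herm B
  set W := LinearMap.range (L (C * E)) with hWdef
  set P := pm W with hPdef
  have hPherm : Pᴴ = P := pm_conjT W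
  have h1 : P * (C * E) = C * E := pm_mul_self_of_range_le le_rfl
  have h2 : E * (C * P) = E * C := by
    have h := congrArg conjTranspose h1
    simpa only [Matrix.conjTranspose_mul, hPherm, hCherm.eq, hEherm.eq,
      Matrix.mul_assoc] using h
  set D := C * P * C with hDdef
  have hPP : P * (P * C) = P * C := by rw [← Matrix.mul_assoc, pm_mul_pm]
  have hDeq : D = (P * C)ᴴ * (P * C) := by
    rw [Matrix.conjTranspose_mul, hPherm, hCherm.eq, hDdef, Matrix.mul_assoc,
      Matrix.mul_assoc C P (P * C), hPP]
  have hDpsd : D.PosSemidef := hDeq ▸ Matrix.posSemidef_conjTranspose_mul_self _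
  have hED : E * D = E * D0 := by
    have h3 : E * D = E * (C * P) * C := by rw [hDdef]; simp only [Matrix.mul_assoc]
    rw [h3, h2, Matrix.mul_assoc, hCC]
  have hEB : E * B = 0 := em_mul_B B
  have hED0 : E * D0 = -(E * A) := by
    rw [hD0def, Matrix.mul_sub]
    rw [show E * (B * X0 * Bᴴ) = 0 by
      rw [← Matrix.mul_assoc, ← Matrix.mul_assoc, hEB, Matrix.zero_mul, Matrix.zero_mul]]
    exact zero_sub _
  have hEAD : E * (A + D) = 0 := by
    rw [Matrix.mul_add, hED, hED0, add_neg_cancel]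
  have hrange : LinearMap.range (L (A + D)) ≤ LinearMap.range (L B) :=
    range_le_of_em_mul_eq_zero B hEAD
  have hADherm : (A + D).IsHermitian := hA.add hDpsd.1
  obtain ⟨X, hXh, hXeq⟩ := exists_hermitian_X hADherm hrange
  have hfinal : B * X * Bᴴ - A = D := by rw [hXeq]; exact add_sub_cancel_left A D
  refine ⟨X, hXh, hfinal ▸ hDpsd, ?_⟩
  rw [hfinal]
  have r1 : D.rank = (P * C).rank := by rw [hDeq, Matrix.rank_conjTranspose_mul_self]
  have r2 : (P * C).rank = (C * P).rank := by
    conv_lhs => rw [show P * C = (C * P)ᴴ by rw [Matrix.conjTranspose_mul, hPherm, hCherm.eq]]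
    rw [Matrix.rank_conjTranspose]
  have r3 : (C * P).rank = (D0 * E).rank := by
    rw [rank_eq_L, rank_eq_L, range_L_mul, hPdef, range_L_pm, hWdef, ← range_L_mul,
      ← Matrix.mul_assoc, hCC]
  have r4 : (D0 * E).rank = (E * D0).rank := by
    conv_lhs => rw [show D0 * E = (E * D0)ᴴ by
      rw [Matrix.conjTranspose_mul, hEherm.eq, hD0.1.eq]]
    rw [Matrix.rank_conjTranspose]
  have r5 : (E * D0).rank = (E * A).rank := by rw [hED0, rank_neg]
  rw [r1, r2, r3, r4, r5]

lemma max_attained (hA : A.IsHermitian) {X0 : Matrix b b ℂ} (hX0 : X0.IsHermitian)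
    (hD0 : (B * X0 * Bᴴ - A).PosSemidef) :
    ∃ X : Matrix b b ℂ, X.IsHermitian ∧ (B * X * Bᴴ - A).PosSemidef ∧
      (B * X * Bᴴ - A).rank = (fromCols A B).rank := by
  set D0 := B * X0 * Bᴴ - A with hD0def
  refine ⟨X0 + 1, hX0.add Matrix.isHermitian_one, ?_, ?_⟩ <;>
    rw [show B * (X0 + 1) * Bᴴ - A = D0 + B * Bᴴ by
      rw [Matrix.mul_add, Matrix.mul_one, Matrix.add_mul, hD0def]; abel]
  · exact hD0.add (Matrix.posSemidef_self_mul_conjTranspose B)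
  · set U := LinearMap.range (L B) with hU
    have hBBt : LinearMap.range (L (B * Bᴴ)) = U := by
      apply Submodule.eq_of_le_of_finrank_le
      · rw [range_L_mul]
        exact le_trans (Submodule.map_mono le_top) (by rw [Submodule.map_top])
      · rw [← rank_eq_L, ← rank_eq_L, Matrix.rank_self_mul_conjTranspose]
    have hsup : LinearMap.range (L D0) ⊔ U = LinearMap.range (L A) ⊔ U := by
      apply le_antisymm
      · refine sup_le ?_ le_sup_right
        rintro y ⟨x, rfl⟩
        have e : D0 = B * (X0 * Bᴴ) - A := by rw [hD0def, Matrix.mul_assoc]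
        have : L D0 x = L (B * (X0 * Bᴴ)) x - L A x := by
          rw [e, L_sub, LinearMap.sub_apply]
        rw [this, L_mul]
        exact Submodule.sub_mem _ (le_sup_right (a := LinearMap.range (L A)) ⟨_, rfl⟩)
          (le_sup_left (b := U) ⟨x, rfl⟩)
      · refine sup_le ?_ le_sup_right
        rintro y ⟨x, rfl⟩
        have e : A = B * (X0 * Bᴴ) - D0 := by rw [hD0def, Matrix.mul_assoc, sub_sub_cancel]
        have : L A x = L (B * (X0 * Bᴴ)) x - L D0 x := by
          conv_lhs => rw [e]
          rw [L_sub, LinearMap.sub_apply]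
        rw [this, L_mul]
        exact Submodule.sub_mem _ (le_sup_right (a := LinearMap.range (L D0)) ⟨_, rfl⟩)
          (le_sup_left (b := U) ⟨x, rfl⟩)
    rw [rank_eq_L, rank_eq_L, psd_range_add hD0 (Matrix.posSemidef_self_mul_conjTranspose B),
      hBBt, hsup, range_L_fromColumns]

lemma rank_ub {X : Matrix b b ℂ} : (B * X * Bᴴ - A).rank ≤ (fromCols A B).rank := by
  have h : B * X * Bᴴ - A = Matrix.fromCols A B * Matrix.fromRows (-1) (X * Bᴴ) := by
    erw [Matrix.fromCols_mul_fromRows];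
    rw [ Matrix.mul_neg, Matrix.mul_one,
      ← Matrix.mul_assoc, neg_add_eq_sub]
  rw [h]
  exact Matrix.rank_mul_le_left _ _

lemma rank_lb {X : Matrix b b ℂ} :
    (fromCols A B).rank ≤ (B * X * Bᴴ - A).rank + B.rank := by
  have h : Matrix.fromCols A B = Matrix.fromCols (B * X * Bᴴ - A) B *
      Matrix.fromBlocks (-1) 0 (X * Bᴴ) 1 := by
    erw [Matrix.fromCols_mul_fromBlocks];
    rw [ Matrix.mul_neg, Matrix.mul_one,
      ← Matrix.mul_assoc, Matrix.mul_zero, Matrix.mul_one, zero_add,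
      show -(B * X * Bᴴ - A) + B * X * Bᴴ = A by abel]
  calc (fromCols A B).rank ≤ (fromCols (B * X * Bᴴ - A) B).rank := by
        rw [h]; exact Matrix.rank_mul_le_left _ _
    _ ≤ (B * X * Bᴴ - A).rank + B.rank := rank_fromColumns_le _ _

end Main

end LMI


theorem lmi_rank_extrema {m n : ℕ} (A : Matrix (Fin m) (Fin m) ℂ)
    (B : Matrix (Fin m) (Fin n) ℂ) (hA : A.IsHermitian)
    (hcons : ∃ X : Matrix (Fin n) (Fin n) ℂ, X.IsHermitian ∧ (B * X * Bᴴ - A).PosSemidef) :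
    IsLeast {r : ℕ | ∃ X : Matrix (Fin n) (Fin n) ℂ, X.IsHermitian ∧
        (B * X * Bᴴ - A).PosSemidef ∧ r = (B * X * Bᴴ - A).rank}
      ((Matrix.fromCols A B).rank - B.rank) ∧
    IsGreatest {r : ℕ | ∃ X : Matrix (Fin n) (Fin n) ℂ, X.IsHermitian ∧
        (B * X * Bᴴ - A).PosSemidef ∧ r = (B * X * Bᴴ - A).rank}
      ((Matrix.fromCols A B).rank) := by
  obtain ⟨X0, hX0, hD0⟩ := hcons
  have hkey := LMI.rank_fromColumns_eq B A
  constructor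
  · constructor
    · obtain ⟨X, h1, h2, h3⟩ := LMI.min_attained hA hX0 hD0
      refine ⟨X, h1, h2, ?_⟩
      rw [h3, hkey]
      omega
    · rintro r ⟨X, hX, hD, rfl⟩
      have := LMI.rank_lb (A := A) (B := B) (X := X)
      omega
  · constructor
    · obtain ⟨X, h1, h2, h3⟩ := LMI.max_attained hA hX0 hD0
      exact ⟨X, h1, h2, h3.symm⟩
    · rintro r ⟨X, hX, hD, rfl⟩
      exact LMI.rank_ub
end
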